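/- arXiv:1301.6448 — 5 statements merged into one kernel-verified Lean document; each statement's English description precedes it below -/
import Mathlib

section
/- The equation C(ϑ·T₀) = 0 has exactly two solutions ϑ in the interval [0, 1), and these two solutions differ by exactly 1/2. -/
open Set Metric NNReal

lemma aux_pow_lip (m : ℕ) {x y : ℝ} (hx : |x| ≤ 1) (hy : |y| ≤ 1) :
    |x ^ m - y ^ m| ≤ m * |x - y| := by
  induction m with
  | zero => simp
  | succ k ih =>
    have h1 : x ^ (k+1) - y ^ (k+1) = x * (x ^ k - y ^ k) + (x - y) * y ^ k := by ring
    have hyk : |y| ^ k ≤ 1 := pow_le_one₀ (abs_nonneg y) hy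
    have habs : |x ^ (k+1) - y ^ (k+1)| ≤ |x| * |x ^ k - y ^ k| + |x - y| * |y| ^ k := by
      rw [h1]
      exact (abs_add_le _ _).trans (by rw [abs_mul, abs_mul, abs_pow])
    have h2 : |x| * |x ^ k - y ^ k| ≤ k * |x - y| := by
      calc |x| * |x ^ k - y ^ k| ≤ 1 * (k * |x - y|) :=
            mul_le_mul hx ih (abs_nonneg _) zero_le_one
        _ = k * |x - y| := by ring
    have h3 : |x - y| * |y| ^ k ≤ |x - y| :=
      (mul_le_mul_of_nonneg_left hyk (abs_nonneg _)).trans (by rw [mul_one])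
    push_cast
    nlinarith [abs_nonneg (x - y)]

lemma aux_ode_unique (m : ℕ) (t₀ : ℝ) (f g : ℝ → ℝ × ℝ)
    (hf : ∀ t, HasDerivAt f ((f t).2, -((f t).1 ^ m)) t)
    (hg : ∀ t, HasDerivAt g ((g t).2, -((g t).1 ^ m)) t)
    (hfb : ∀ t, ‖f t‖ ≤ 1) (hgb : ∀ t, ‖g t‖ ≤ 1)
    (heq : f t₀ = g t₀) : f = g := by
  have hlip : ∀ t : ℝ, LipschitzOnWith ((m : ℝ≥0) + 1)
      (fun p : ℝ × ℝ => ((p.2, -(p.1 ^ m)) : ℝ × ℝ)) (closedBall 0 1) := by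
    intro t
    apply LipschitzOnWith.of_dist_le_mul
    intro p hp q hq
    rw [mem_closedBall_zero_iff] at hp hq
    have hp1 : |p.1| ≤ 1 := (norm_fst_le p).trans hp
    have hq1 : |q.1| ≤ 1 := (norm_fst_le q).trans hq
    have hd1 : dist p.1 q.1 ≤ dist p q := le_max_left _ _
    have hd2 : dist p.2 q.2 ≤ dist p q := le_max_right _ _
    have hKcast : (((m : ℝ≥0) + 1 : ℝ≥0) : ℝ) = (m : ℝ) + 1 := by push_cast; ring
    have hdnn : (0:ℝ) ≤ dist p q := dist_nonneg
    have hmnn : (0:ℝ) ≤ (m : ℝ) := Nat.cast_nonneg m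
    rw [Prod.dist_eq, hKcast]
    apply max_le
    · nlinarith
    · have he : dist (-(p.1 ^ m)) (-(q.1 ^ m)) = |p.1 ^ m - q.1 ^ m| := by
        rw [Real.dist_eq, ← abs_neg]; ring_nf
      rw [he]
      have := aux_pow_lip m hp1 hq1
      have hd1' : |p.1 - q.1| ≤ dist p q := by rwa [Real.dist_eq] at hd1
      nlinarith
  funext t
  have hab : t ∈ Icc (min t t₀ - 1) (max t t₀ + 1) := by
    constructor
    · have h1 := min_le_left t t₀; linarith
    · have h2 := le_max_left t t₀; linarith
  have ht₀ : t₀ ∈ Ioo (min t t₀ - 1) (max t t₀ + 1) := by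
    constructor
    · have := min_le_right t t₀; linarith
    · have := le_max_right t t₀; linarith
  refine ODE_solution_unique_of_mem_Icc (v := fun _ p => ((p.2, -(p.1 ^ m)) : ℝ × ℝ))
    (s := fun _ => closedBall (0 : ℝ × ℝ) 1) (fun t _ => hlip t) ht₀ ?_ ?_ ?_ ?_ ?_ ?_ heq hab
  · exact fun s _ => (hf s).continuousAt.continuousWithinAt
  · exact fun s _ => hf s
  · exact fun s _ => mem_closedBall_zero_iff.mpr (hfb s)
  · exact fun s _ => (hg s).continuousAt.continuousWithinAt
  · exact fun s _ => hg s
  · exact fun s _ => mem_closedBall_zero_iff.mpr (hgb s)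

/-- The equation `C(ϑ·T₀) = 0` has exactly two solutions `ϑ` in `[0, 1)`,
and these two solutions differ by exactly `1/2`. -/
theorem C_zeros_in_unit_interval
    (n : ℕ) (hn : 1 ≤ n)
    (C S : ℝ → ℝ)
    (hC' : ∀ t, HasDerivAt C (S t) t)
    (hS' : ∀ t, HasDerivAt S (-(C t ^ (2 * n + 1))) t)
    (hC0 : C 0 = 1) (hS0 : S 0 = 0)
    (T₀ : ℝ) (hT₀pos : 0 < T₀)
    (hCper : Function.Periodic C T₀) (hSper : Function.Periodic S T₀)
    (hT₀min : ∀ T : ℝ, 0 < T → Function.Periodic C T → Function.Periodic S T → T₀ ≤ T) :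
    ∃ ϑ₁ ϑ₂ : ℝ, ϑ₁ ∈ Set.Ico (0:ℝ) 1 ∧ ϑ₂ ∈ Set.Ico (0:ℝ) 1 ∧ ϑ₁ ≠ ϑ₂ ∧
      C (ϑ₁ * T₀) = 0 ∧ C (ϑ₂ * T₀) = 0 ∧
      (∀ ϑ ∈ Set.Ico (0:ℝ) 1, C (ϑ * T₀) = 0 → ϑ = ϑ₁ ∨ ϑ = ϑ₂) ∧
      |ϑ₁ - ϑ₂| = 1 / 2 := by
  set m := 2 * n + 1 with hm
  -- energy conservation
  have hE : ∀ t, ((n : ℝ) + 1) * S t ^ 2 + C t ^ (2 * n + 2) = 1 := by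
    have hEd : ∀ t, HasDerivAt (fun t => ((n : ℝ) + 1) * S t ^ 2 + C t ^ (2 * n + 2)) 0 t := by
      intro t
      have h1 : HasDerivAt (fun t => S t ^ 2) (2 * S t ^ 1 * -(C t ^ m)) t := (hS' t).pow 2
      have h2 : HasDerivAt (fun t => C t ^ (2 * n + 2))
          ((2 * n + 2 : ℕ) * C t ^ (2 * n + 2 - 1) * S t) t := (hC' t).pow (2 * n + 2)
      have h3 := (h1.const_mul ((n : ℝ) + 1)).add h2
      refine h3.congr_deriv ?_
      have : 2 * n + 2 - 1 = m := by omega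
      rw [this]
      push_cast
      ring
    have hconst : ∀ t, ((n : ℝ) + 1) * S t ^ 2 + C t ^ (2 * n + 2)
        = ((n : ℝ) + 1) * S 0 ^ 2 + C 0 ^ (2 * n + 2) := by
      intro t
      exact is_const_of_deriv_eq_zero (fun x => (hEd x).differentiableAt)
        (fun x => (hEd x).deriv) t 0
    intro t
    rw [hconst t, hS0, hC0]
    norm_num
  -- bounds
  have hCb : ∀ t, |C t| ≤ 1 := by
    intro t
    have h1 : C t ^ (2 * n + 2) ≤ 1 := by nlinarith [hE t, sq_nonneg (S t)]
    have h2 : |C t| ^ (2 * n + 2) ≤ 1 := by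
      rw [← abs_pow]
      have hpow : C t ^ (2 * n + 2) = (C t ^ (n + 1)) ^ 2 := by
        rw [← pow_mul]; congr 1; omega
      have : (0:ℝ) ≤ C t ^ (2 * n + 2) := by rw [hpow]; exact sq_nonneg _
      rwa [abs_of_nonneg this]
    exact (pow_le_one_iff_of_nonneg (abs_nonneg _) (by omega)).mp h2
  have hSb : ∀ t, |S t| ≤ 1 := by
    intro t
    have h0 : (0:ℝ) ≤ C t ^ (2 * n + 2) := by
      have hpow : C t ^ (2 * n + 2) = (C t ^ (n + 1)) ^ 2 := by
        rw [← pow_mul]; congr 1; omega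
      rw [hpow]; exact sq_nonneg _
    have h1 : S t ^ 2 ≤ 1 := by nlinarith [hE t, sq_nonneg (S t)]
    exact (sq_le_one_iff_abs_le_one (S t)).mp h1
  have hPb : ∀ t, ‖((C t, S t) : ℝ × ℝ)‖ ≤ 1 := by
    intro t
    rw [Prod.norm_def]
    exact max_le (by simpa [Real.norm_eq_abs] using hCb t) (by simpa [Real.norm_eq_abs] using hSb t)
  have hP : ∀ t, HasDerivAt (fun t => ((C t, S t) : ℝ × ℝ))
      (((fun t => ((C t, S t) : ℝ × ℝ)) t).2, -(((fun t => ((C t, S t) : ℝ × ℝ)) t).1 ^ m)) t :=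
    fun t => (hC' t).prodMk (hS' t)
  -- even symmetry
  have heven : ∀ t, C (-t) = C t ∧ S (-t) = -S t := by
    have key := aux_ode_unique m 0 (fun t => ((C (-t), -S (-t)) : ℝ × ℝ))
      (fun t => ((C t, S t) : ℝ × ℝ)) ?_ hP ?_ hPb ?_
    · intro t
      have := congrFun key t
      simp only [Prod.mk.injEq] at this
      exact ⟨this.1, by linarith [this.2]⟩
    · intro t
      have h1 : HasDerivAt (fun t : ℝ => C (-t)) (S (-t) * (-1)) t :=
        (hC' (-t)).comp t (hasDerivAt_neg t)
      have h2 : HasDerivAt (fun t : ℝ => -S (-t)) (-(-(C (-t) ^ m) * (-1))) t :=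
        ((hS' (-t)).comp t (hasDerivAt_neg t)).neg
      have h3 := h1.prodMk h2
      convert h3 using 1
      simp only [Prod.mk.injEq]
      constructor <;> ring
    · intro t
      have := hPb (-t)
      rw [Prod.norm_def] at this ⊢
      simpa [Real.norm_eq_abs, abs_neg] using this
    · simp [hS0]
  have hCc : Continuous C := continuous_iff_continuousAt.mpr fun t => (hC' t).continuousAt
  -- existence of a zero of C
  have hzero : ∃ t, C t = 0 := by
    by_contra h
    push_neg at h
    have hCpos : ∀ t, 0 < C t := by
      intro t
      by_contra hle
      push_neg at hle
      have hlt : C t < 0 := lt_of_le_of_ne hle (h t)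
      rcases le_or_gt 0 t with ht | ht
      · have := intermediate_value_Icc' ht hCc.continuousOn
          (by rw [hC0]; exact ⟨hlt.le, zero_le_one⟩ : (0:ℝ) ∈ Icc (C t) (C 0))
        obtain ⟨z, _, hz⟩ := this
        exact h z hz
      · have := intermediate_value_Icc ht.le hCc.continuousOn
          (by rw [hC0]; exact ⟨hlt.le, zero_le_one⟩ : (0:ℝ) ∈ Icc (C t) (C 0))
        obtain ⟨z, _, hz⟩ := this
        exact h z hz
    have hanti : StrictAnti S := by
      apply strictAnti_of_deriv_neg
      intro x
      rw [(hS' x).deriv]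
      have := pow_pos (hCpos x) m
      linarith
    have : S T₀ < S 0 := hanti hT₀pos
    have hTper : S T₀ = S 0 := by simpa using hSper 0
    linarith
  -- first nonnegative zero τ
  set Z : Set ℝ := {t : ℝ | 0 ≤ t ∧ C t = 0} with hZ
  have hZne : Z.Nonempty := by
    obtain ⟨t0, ht0⟩ := hzero
    refine ⟨t0 - ⌊t0 / T₀⌋ * T₀, ?_, ?_⟩
    · have hfr : t0 - ⌊t0 / T₀⌋ * T₀ = T₀ * Int.fract (t0 / T₀) := by
        rw [Int.fract]
        field_simp
      rw [hfr]
      exact mul_nonneg hT₀pos.le (Int.fract_nonneg _)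
    · rw [hCper.sub_int_mul_eq]
      exact ht0
  have hZbdd : BddBelow Z := ⟨0, fun x hx => hx.1⟩
  have hZcl : IsClosed Z := by
    have : Z = Ici 0 ∩ C ⁻¹' {0} := by
      ext x; simp [hZ, Set.mem_Ici]
    rw [this]
    exact isClosed_Ici.inter (isClosed_singleton.preimage hCc)
  set τ := sInf Z with hτ
  have hτmem : τ ∈ Z := hZcl.csInf_mem hZne hZbdd
  have hτnonneg : 0 ≤ τ := hτmem.1
  have hCτ : C τ = 0 := hτmem.2
  have hτpos : 0 < τ := by
    rcases eq_or_lt_of_le hτnonneg with h | h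
    · exfalso; rw [← h] at hCτ; rw [hC0] at hCτ; norm_num at hCτ
    · exact h
  have hCpos : ∀ t ∈ Ico (0:ℝ) τ, 0 < C t := by
    intro t ht
    by_contra hle
    push_neg at hle
    have := intermediate_value_Icc' ht.1 hCc.continuousOn
      (by rw [hC0]; exact ⟨hle, zero_le_one⟩ : (0:ℝ) ∈ Icc (C t) (C 0))
    obtain ⟨z, hzmem, hz⟩ := this
    have hzZ : z ∈ Z := ⟨hzmem.1, hz⟩
    have : τ ≤ z := csInf_le hZbdd hzZ
    have : z ≤ t := hzmem.2
    linarith [ht.2]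
  -- monotonicity on [0, τ]
  have hSanti : StrictAntiOn S (Icc 0 τ) := by
    apply strictAntiOn_of_deriv_neg (convex_Icc 0 τ) (fun x _ => (hS' x).continuousAt.continuousWithinAt)
    intro x hx
    rw [interior_Icc] at hx
    rw [(hS' x).deriv]
    have := pow_pos (hCpos x ⟨hx.1.le, hx.2⟩) m
    linarith
  have hSneg : ∀ t ∈ Ioc (0:ℝ) τ, S t < 0 := by
    intro t ht
    have := hSanti ⟨le_refl 0, hτnonneg⟩ ⟨ht.1.le, ht.2⟩ ht.1
    rwa [hS0] at this
  have hCanti : StrictAntiOn C (Icc 0 τ) := by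
    apply strictAntiOn_of_deriv_neg (convex_Icc 0 τ) hCc.continuousOn
    intro x hx
    rw [interior_Icc] at hx
    rw [(hC' x).deriv]
    exact hSneg x ⟨hx.1, hx.2.le⟩
  have hClt1 : ∀ t ∈ Ioc (0:ℝ) τ, C t < 1 := by
    intro t ht
    have := hCanti ⟨le_refl 0, hτnonneg⟩ ⟨ht.1.le, ht.2⟩ ht.1
    rwa [hC0] at this
  have hCnonneg : ∀ t ∈ Icc (0:ℝ) τ, 0 ≤ C t := by
    intro t ht
    rcases eq_or_lt_of_le ht.2 with h | h
    · rw [h, hCτ]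
    · exact (hCpos t ⟨ht.1, h⟩).le
  -- reflection symmetry at τ
  have hsym : ∀ t, C (2 * τ - t) = -C t ∧ S (2 * τ - t) = S t := by
    have key := aux_ode_unique m τ (fun t => ((-C (2 * τ - t), S (2 * τ - t)) : ℝ × ℝ))
      (fun t => ((C t, S t) : ℝ × ℝ)) ?_ hP ?_ hPb ?_
    · intro t
      have := congrFun key t
      simp only [Prod.mk.injEq] at this
      exact ⟨by linarith [this.1], this.2⟩
    · intro t
      have hneg : HasDerivAt (fun x : ℝ => 2 * τ - x) (-1) t := (hasDerivAt_id t).const_sub (2 * τ)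
      have h1 : HasDerivAt (fun t : ℝ => -C (2 * τ - t)) (-(S (2 * τ - t) * (-1))) t :=
        ((hC' (2 * τ - t)).comp t hneg).neg
      have h2 : HasDerivAt (fun t : ℝ => S (2 * τ - t)) (-(C (2 * τ - t) ^ m) * (-1)) t :=
        (hS' (2 * τ - t)).comp t hneg
      have h3 := h1.prodMk h2
      convert h3 using 1
      simp only [Prod.mk.injEq]
      constructor
      · ring
      · have hodd : Odd m := ⟨n, by omega⟩
        rw [hodd.neg_pow]
        ring
    · intro t
      have := hPb (2 * τ - t)
      rw [Prod.norm_def] at this ⊢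
      simpa [Real.norm_eq_abs, abs_neg] using this
    · have : 2 * τ - τ = τ := by ring
      simp [this, hCτ]
  have hshiftC : ∀ t, C (t + 2 * τ) = -C t := by
    intro t
    have h1 := (hsym (-t)).1
    have h2 := (heven t).1
    have he : 2 * τ - -t = t + 2 * τ := by ring
    rw [he] at h1
    rw [h1, h2]
  have hshiftS : ∀ t, S (t + 2 * τ) = -S t := by
    intro t
    have h1 := (hsym (-t)).2
    have h2 := (heven t).2
    have he : 2 * τ - -t = t + 2 * τ := by ring
    rw [he] at h1
    rw [h1, h2]
  -- 4τ is a period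
  have hper4C : Function.Periodic C (4 * τ) := by
    intro t
    have h1 := hshiftC (t + 2 * τ)
    have h2 := hshiftC t
    have he : t + 2 * τ + 2 * τ = t + 4 * τ := by ring
    rw [he] at h1
    rw [h1, h2, neg_neg]
  have hper4S : Function.Periodic S (4 * τ) := by
    intro t
    have h1 := hshiftS (t + 2 * τ)
    have h2 := hshiftS t
    have he : t + 2 * τ + 2 * τ = t + 4 * τ := by ring
    rw [he] at h1
    rw [h1, h2, neg_neg]
  have hT₀le : T₀ ≤ 4 * τ := hT₀min (4 * τ) (by linarith) hper4C hper4S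
  -- C(4τ - t) = C t
  have hrefl4 : ∀ t, C (4 * τ - t) = C t := by
    intro t
    have h1 := (hsym (t - 2 * τ)).1
    have he : 2 * τ - (t - 2 * τ) = 4 * τ - t := by ring
    rw [he] at h1
    have h2 := hshiftC (t - 2 * τ)
    have he2 : t - 2 * τ + 2 * τ = t := by ring
    rw [he2] at h2
    rw [h1, ← h2]
  -- C < 1 on (0, 4τ)
  have hA : ∀ t, 0 < t → t ≤ 2 * τ → C t < 1 := by
    intro t ht0 ht2
    rcases le_or_gt t τ with h | h
    · exact hClt1 t ⟨ht0, h⟩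
    · have h1 := (hsym t).1
      have hmem : 2 * τ - t ∈ Icc (0:ℝ) τ := ⟨by linarith, by linarith⟩
      have h2 := hCnonneg _ hmem
      have : C t = -C (2 * τ - t) := by linarith [h1]
      linarith
  have hlt1 : ∀ t, 0 < t → t < 4 * τ → C t < 1 := by
    intro t ht0 ht4
    rcases le_or_gt t (2 * τ) with h | h
    · exact hA t ht0 h
    · have := hrefl4 t
      rw [← this]
      exact hA (4 * τ - t) (by linarith) (by linarith)
  -- T₀ = 4τ
  have hT₀eq : T₀ = 4 * τ := by
    by_contra hne
    have hlt : T₀ < 4 * τ := lt_of_le_of_ne hT₀le hne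
    have : C T₀ = 1 := by
      have := hCper 0
      simpa [hC0] using this
    have := hlt1 T₀ hT₀pos hlt
    linarith
  -- C(3τ) = 0
  have hC3τ : C (3 * τ) = 0 := by
    have := hshiftC τ
    have he : τ + 2 * τ = 3 * τ := by ring
    rw [he] at this
    rw [this, hCτ, neg_zero]
  -- classification of zeros in [0, 4τ)
  have hzeros : ∀ t, 0 ≤ t → t < 4 * τ → C t = 0 → t = τ ∨ t = 3 * τ := by
    intro t ht0 ht4 hCt
    rcases lt_trichotomy t τ with h | h | h
    · exact absurd hCt (ne_of_gt (hCpos t ⟨ht0, h⟩))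
    · exact Or.inl h
    rcases le_or_gt t (2 * τ) with h2 | h2
    · exfalso
      have h1 := (hsym t).1
      have hp := hCpos (2 * τ - t) ⟨by linarith, by linarith⟩
      linarith [h1, hCt]
    rcases lt_trichotomy t (3 * τ) with h3 | h3 | h3
    · exfalso
      have h1 := hshiftC (t - 2 * τ)
      have he : t - 2 * τ + 2 * τ = t := by ring
      rw [he] at h1
      have hp := hCpos (t - 2 * τ) ⟨by linarith, by linarith⟩
      linarith [h1, hCt]
    · exact Or.inr h3
    · exfalso
      have h1 := hrefl4 t
      have hp := hCpos (4 * τ - t) ⟨by linarith, by linarith⟩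
      linarith [h1, hCt]
  -- conclusion
  refine ⟨1/4, 3/4, ⟨by norm_num, by norm_num⟩, ⟨by norm_num, by norm_num⟩, by norm_num, ?_, ?_, ?_, ?_⟩
  · have he : (1/4 : ℝ) * T₀ = τ := by rw [hT₀eq]; ring
    rw [he]; exact hCτ
  · have he : (3/4 : ℝ) * T₀ = 3 * τ := by rw [hT₀eq]; ring
    rw [he]; exact hC3τ
  · intro ϑ hϑ hCϑ
    have h0 : 0 ≤ ϑ * T₀ := mul_nonneg hϑ.1 hT₀pos.le
    have h4 : ϑ * T₀ < 4 * τ := by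
      rw [← hT₀eq]
      calc ϑ * T₀ < 1 * T₀ := by
            exact mul_lt_mul_of_pos_right hϑ.2 hT₀pos
        _ = T₀ := one_mul T₀
    rcases hzeros (ϑ * T₀) h0 h4 hCϑ with h | h
    · left
      have : ϑ * T₀ = (1/4) * T₀ := by rw [h, hT₀eq]; ring
      exact mul_right_cancel₀ (ne_of_gt hT₀pos) this
    · right
      have : ϑ * T₀ = (3/4) * T₀ := by rw [h, hT₀eq]; ring
      exact mul_right_cancel₀ (ne_of_gt hT₀pos) this
  · rw [abs_of_nonpos (by norm_num)]
    norm_num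
end

section
/- The map Ψ₁(λ, ϑ) = ((aλ)^α · C(ϑ·T₀), (aλ)^β · S(ϑ·T₀)), viewed as a map from (0, ∞) × ℝ to ℝ², has Jacobian determinant identically equal to the constant −a·α·T₀ = −T₀²; that is, ∂_λ x · ∂_ϑ y − ∂_ϑ x · ∂_λ y = −T₀² at every point (λ, ϑ) ∈ (0, ∞) × ℝ, where (x, y) = Ψ₁(λ, ϑ). -/
/-- Energy conservation for the generalized oscillator. -/
lemma Psi1_energy (n : ℕ) (C S : ℝ → ℝ)
    (hC' : ∀ t, HasDerivAt C (S t) t)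
    (hS' : ∀ t, HasDerivAt S (-(C t ^ (2 * n + 1))) t)
    (hC0 : C 0 = 1) (hS0 : S 0 = 0) :
    ∀ t, (n + 1 : ℝ) * S t ^ 2 + C t ^ (2 * n + 2) = 1 := by
  intro t
  set E : ℝ → ℝ := fun t => (n + 1 : ℝ) * S t ^ 2 + C t ^ (2 * n + 2) with hE
  have hE' : ∀ s, HasDerivAt E 0 s := by
    intro s
    have h1 : HasDerivAt (fun u => (n + 1 : ℝ) * S u ^ 2)
        ((n + 1 : ℝ) * (2 * S s ^ 1 * (-(C s ^ (2 * n + 1))))) s :=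
      (((hS' s).pow 2)).const_mul _
    have h2 : HasDerivAt (fun u => C u ^ (2 * n + 2))
        (↑(2 * n + 2) * C s ^ (2 * n + 1) * S s) s := by
      simpa using (hC' s).fun_pow (2 * n + 2)
    have : HasDerivAt (fun u => (n + 1 : ℝ) * S u ^ 2 + C u ^ (2 * n + 2)) _ s := h1.fun_add h2
    convert this using 1
    push_cast
    ring
  have hconst : E t = E 0 := by
    have hdiff : Differentiable ℝ E := fun s => (hE' s).differentiableAt
    have hder : ∀ s, deriv E s = 0 := fun s => (hE' s).deriv
    exact is_const_of_deriv_eq_zero hdiff hder t 0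
  have : E 0 = 1 := by simp [hE, hC0, hS0]
  exact hconst.trans this

/-- The map `Ψ₁(λ, ϑ) = ((aλ)^α · C(ϑ·T₀), (aλ)^β · S(ϑ·T₀))`, viewed as a
map from `(0, ∞) × ℝ` to `ℝ²`, has Jacobian determinant identically equal to the
constant `-a·α·T₀ = -T₀²`: at every point `(λ, ϑ) ∈ (0, ∞) × ℝ`,
`∂_λ x · ∂_ϑ y − ∂_ϑ x · ∂_λ y = -a·α·T₀ = -T₀²`, where `(x, y) = Ψ₁(λ, ϑ)`. -/
theorem Psi1_jacobian
    (n : ℕ) (hn : 1 ≤ n)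
    (C S : ℝ → ℝ)
    (hC' : ∀ t, HasDerivAt C (S t) t)
    (hS' : ∀ t, HasDerivAt S (-(C t ^ (2 * n + 1))) t)
    (hC0 : C 0 = 1) (hS0 : S 0 = 0)
    (T₀ : ℝ) (hT₀pos : 0 < T₀)
    (hCper : Function.Periodic C T₀) (hSper : Function.Periodic S T₀)
    (hT₀min : ∀ T : ℝ, 0 < T → Function.Periodic C T → Function.Periodic S T → T₀ ≤ T)
    (α β a d : ℝ)
    (hα : α = 1 / (n + 2)) (hβ : β = (n + 1) / (n + 2))
    (ha : a = T₀ / α) (hd : d = (2 * a) ^ (2 * β) / (2 * n + 2)) :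
    ∀ lam : ℝ, 0 < lam → ∀ ϑ : ℝ,
      deriv (fun l : ℝ => (a * l) ^ α * C (ϑ * T₀)) lam *
          deriv (fun θ : ℝ => (a * lam) ^ β * S (θ * T₀)) ϑ -
        deriv (fun θ : ℝ => (a * lam) ^ α * C (θ * T₀)) ϑ *
          deriv (fun l : ℝ => (a * l) ^ β * S (ϑ * T₀)) lam
        = -(a * α * T₀) ∧ -(a * α * T₀) = -(T₀ ^ 2) := by
  intro lam hlam ϑ
  have hn2 : (n : ℝ) + 2 ≠ 0 := by positivity
  have hαpos : 0 < α := by rw [hα]; positivity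
  have hapos : 0 < a := by rw [ha]; positivity
  have hP : 0 < a * lam := mul_pos hapos hlam
  have hPne : a * lam ≠ 0 := ne_of_gt hP
  -- derivatives in lam
  have hinL : HasDerivAt (fun l : ℝ => a * l) a lam := by
    simpa using (hasDerivAt_id lam).const_mul a
  have hxL : HasDerivAt (fun l : ℝ => (a * l) ^ α)
      (α * (a * lam) ^ (α - 1) * a) lam :=
    (Real.hasDerivAt_rpow_const (p := α) (Or.inl hPne)).comp lam hinL
  have hyL : HasDerivAt (fun l : ℝ => (a * l) ^ β)
      (β * (a * lam) ^ (β - 1) * a) lam :=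
    (Real.hasDerivAt_rpow_const (p := β) (Or.inl hPne)).comp lam hinL
  -- derivatives in θ
  have hinT : HasDerivAt (fun θ : ℝ => θ * T₀) T₀ ϑ := by
    simpa using (hasDerivAt_id ϑ).mul_const T₀
  have hCT : HasDerivAt (fun θ : ℝ => C (θ * T₀)) (S (ϑ * T₀) * T₀) ϑ :=
    (hC' (ϑ * T₀)).comp ϑ hinT
  have hST : HasDerivAt (fun θ : ℝ => S (θ * T₀))
      (-(C (ϑ * T₀) ^ (2 * n + 1)) * T₀) ϑ :=
    (hS' (ϑ * T₀)).comp ϑ hinT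
  have d1 : deriv (fun l : ℝ => (a * l) ^ α * C (ϑ * T₀)) lam
      = α * (a * lam) ^ (α - 1) * a * C (ϑ * T₀) :=
    (hxL.mul_const _).deriv
  have d2 : deriv (fun θ : ℝ => (a * lam) ^ β * S (θ * T₀)) ϑ
      = (a * lam) ^ β * (-(C (ϑ * T₀) ^ (2 * n + 1)) * T₀) :=
    (hST.const_mul _).deriv
  have d3 : deriv (fun θ : ℝ => (a * lam) ^ α * C (θ * T₀)) ϑ
      = (a * lam) ^ α * (S (ϑ * T₀) * T₀) :=
    (hCT.const_mul _).deriv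
  have d4 : deriv (fun l : ℝ => (a * l) ^ β * S (ϑ * T₀)) lam
      = β * (a * lam) ^ (β - 1) * a * S (ϑ * T₀) :=
    (hyL.mul_const _).deriv
  have hαβ : α + β = 1 := by rw [hα, hβ]; field_simp; ring
  have hβα : β = α * (n + 1) := by rw [hα, hβ]; field_simp
  have h1 : (a * lam) ^ (α - 1) * (a * lam) ^ β = 1 := by
    rw [← Real.rpow_add hP]
    have : α - 1 + β = 0 := by linarith
    rw [this, Real.rpow_zero]
  have h2 : (a * lam) ^ α * (a * lam) ^ (β - 1) = 1 := by
    rw [← Real.rpow_add hP]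
    have : α + (β - 1) = 0 := by linarith
    rw [this, Real.rpow_zero]
  have hE := Psi1_energy n C S hC' hS' hC0 hS0 (ϑ * T₀)
  constructor
  · rw [d1, d2, d3, d4]
    set u := C (ϑ * T₀); set v := S (ϑ * T₀)
    have key : α * (a * lam) ^ (α - 1) * a * u * ((a * lam) ^ β * (-(u ^ (2 * n + 1)) * T₀))
        - (a * lam) ^ α * (v * T₀) * (β * (a * lam) ^ (β - 1) * a * v)
        = -(a * T₀) * (((a * lam) ^ (α - 1) * (a * lam) ^ β) * (α * u ^ (2 * n + 2))
            + ((a * lam) ^ α * (a * lam) ^ (β - 1)) * (β * v ^ 2)) := by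
      ring
    rw [key, h1, h2, hβα]
    linear_combination (-(a * T₀ * α)) * hE
  · rw [ha]
    field_simp
end

section
/- There exist ρ₀ ≥ 1 and I₀ > 0 such that for every I ≥ I₀ and every θ, τ ∈ ℝ there is a unique ρ ≥ ρ₀ with H₃(ρ, τ, θ) = I; moreover, writing ρ = d^{−1/(2β)}·I^{1/(2β)} − R(I, θ, τ), for each fixed τ the function (I, θ) ↦ R(I, θ, τ) is C⁵ on [I₀, ∞) × ℝ. -/
open Real Set Filter

noncomputable def coreF (m : ℕ) (dd b : ℝ) (e : ℕ → ℝ) (q : ℕ → ℝ → ℝ → ℝ)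
    (ρ θ τ : ℝ) : ℝ :=
  dd * ρ ^ b + ∑ i ∈ Finset.range m, q i θ τ * ρ ^ e i

noncomputable def coreD (m : ℕ) (dd b : ℝ) (e : ℕ → ℝ) (q : ℕ → ℝ → ℝ → ℝ)
    (ρ θ τ : ℝ) : ℝ :=
  dd * (b * ρ ^ (b - 1)) + ∑ i ∈ Finset.range m, q i θ τ * (e i * ρ ^ (e i - 1))

lemma coreF_hasDerivAt (m : ℕ) (dd b : ℝ) (e : ℕ → ℝ) (q : ℕ → ℝ → ℝ → ℝ)
    (θ τ : ℝ) {ρ : ℝ} (hρ : 0 < ρ) :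
    HasDerivAt (fun x => coreF m dd b e q x θ τ) (coreD m dd b e q ρ θ τ) ρ := by
  unfold coreF coreD
  exact ((Real.hasDerivAt_rpow_const (Or.inl hρ.ne')).const_mul dd).add
    (HasDerivAt.fun_sum fun i _ =>
      (Real.hasDerivAt_rpow_const (Or.inl hρ.ne')).const_mul _)

lemma coreD_pos (m : ℕ) (dd b al Q : ℝ) (hdd : 0 < dd) (hb : 1 < b) (hal : 0 < al)
    (e : ℕ → ℝ) (he0 : ∀ i < m, 0 < e i) (heb : ∀ i < m, e i ≤ b - al)
    (q : ℕ → ℝ → ℝ → ℝ) (hQ : 0 ≤ Q) (hqQ : ∀ i < m, ∀ θ τ : ℝ, |q i θ τ| ≤ Q)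
    (θ τ : ℝ) {ρ : ℝ} (hρ1 : 1 ≤ ρ) (hkey : m * Q + 1 ≤ dd * ρ ^ al) :
    0 < coreD m dd b e q ρ θ τ := by
  have hρpos : (0:ℝ) < ρ := lt_of_lt_of_le one_pos hρ1
  have hY : (0:ℝ) < ρ ^ (b - al - 1) := Real.rpow_pos_of_pos hρpos _
  have hb0 : (0:ℝ) < b := lt_trans one_pos hb
  have hsum : -((m:ℝ) * (Q * (b * ρ ^ (b - al - 1)))) ≤
      ∑ i ∈ Finset.range m, q i θ τ * (e i * ρ ^ (e i - 1)) := by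
    have h := Finset.card_nsmul_le_sum (Finset.range m)
      (fun i => q i θ τ * (e i * ρ ^ (e i - 1))) (-(Q * (b * ρ ^ (b - al - 1)))) ?_
    · simpa [nsmul_eq_mul, mul_comm] using h
    · intro i hi
      show -(Q * (b * ρ ^ (b - al - 1))) ≤ q i θ τ * (e i * ρ ^ (e i - 1))
      have him : i < m := Finset.mem_range.mp hi
      have hx0 : 0 ≤ e i * ρ ^ (e i - 1) :=
        mul_nonneg (he0 i him).le (Real.rpow_pos_of_pos hρpos _).le
      have hie : e i - 1 ≤ b - al - 1 := by linarith [heb i him]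
      have hxe : ρ ^ (e i - 1) ≤ ρ ^ (b - al - 1) :=
        Real.rpow_le_rpow_of_exponent_le hρ1 hie
      have hxy : e i * ρ ^ (e i - 1) ≤ b * ρ ^ (b - al - 1) := by
        apply mul_le_mul _ hxe (Real.rpow_pos_of_pos hρpos _).le hb0.le
        linarith [heb i him, hal]
      have habs := hqQ i him θ τ
      have hql : -Q ≤ q i θ τ := neg_le_of_abs_le habs
      have hqu : q i θ τ ≤ Q := le_of_abs_le habs
      have h1 : -Q * (e i * ρ ^ (e i - 1)) ≤ q i θ τ * (e i * ρ ^ (e i - 1)) :=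
        mul_le_mul_of_nonneg_right hql hx0
      have h2 : Q * (e i * ρ ^ (e i - 1)) ≤ Q * (b * ρ ^ (b - al - 1)) :=
        mul_le_mul_of_nonneg_left hxy hQ
      linarith
  have hid : ρ ^ (b - 1) = ρ ^ (b - al - 1) * ρ ^ al := by
    rw [← Real.rpow_add hρpos]; ring_nf
  unfold coreD
  rw [hid]
  nlinarith [mul_pos (mul_pos hb0 hY) (show (0:ℝ) < dd * ρ ^ al - m * Q by linarith)]

lemma core (m : ℕ) (dd b al Q : ℝ) (hdd : 0 < dd) (hb : 1 < b) (hal : 0 < al)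
    (halb : al < b)
    (e : ℕ → ℝ) (he0 : ∀ i < m, 0 < e i) (heb : ∀ i < m, e i ≤ b - al)
    (q : ℕ → ℝ → ℝ → ℝ) (hq : ∀ τ : ℝ, ∀ i < m, ContDiff ℝ 5 (fun θ => q i θ τ))
    (hQ : 0 ≤ Q) (hqQ : ∀ i < m, ∀ θ τ : ℝ, |q i θ τ| ≤ Q) :
    ∃ ρ₀ : ℝ, 1 ≤ ρ₀ ∧ ∃ I₀ : ℝ, 1 ≤ I₀ ∧
      (∀ I : ℝ, I₀ ≤ I → ∀ θ τ : ℝ, ∃! ρ : ℝ, ρ₀ ≤ ρ ∧ coreF m dd b e q ρ θ τ = I) ∧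
      ∃ r : ℝ → ℝ → ℝ → ℝ,
        (∀ I : ℝ, I₀ ≤ I → ∀ θ τ : ℝ, ρ₀ ≤ r I θ τ ∧
          coreF m dd b e q (r I θ τ) θ τ = I) ∧
        (∀ τ : ℝ, ContDiffOn ℝ 5 (fun z : ℝ × ℝ => r z.1 z.2 τ)
          (Set.Ici I₀ ×ˢ (Set.univ : Set ℝ))) := by
  classical
  set ρ₀ : ℝ := max 1 (((m * Q + 1) / dd) ^ al⁻¹) with hρ₀def
  have hρ₀1 : (1:ℝ) ≤ ρ₀ := le_max_left _ _
  have hX0 : (0:ℝ) ≤ (m * Q + 1) / dd := by positivity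
  have hkey : ∀ ρ : ℝ, ρ₀ ≤ ρ → m * Q + 1 ≤ dd * ρ ^ al := by
    intro ρ hρ
    have h1 : ((m * Q + 1) / dd) ^ al⁻¹ ≤ ρ := le_trans (le_max_right _ _) hρ
    have h2 : (((m * Q + 1) / dd) ^ al⁻¹) ^ al ≤ ρ ^ al :=
      Real.rpow_le_rpow (Real.rpow_nonneg hX0 _) h1 hal.le
    rw [← Real.rpow_mul hX0, inv_mul_cancel₀ hal.ne', Real.rpow_one] at h2
    calc m * Q + 1 = dd * ((m * Q + 1) / dd) := by field_simp
    _ ≤ dd * ρ ^ al := mul_le_mul_of_nonneg_left h2 hdd.le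
  have hmono : ∀ θ τ : ℝ, StrictMonoOn (fun ρ => coreF m dd b e q ρ θ τ) (Set.Ici ρ₀) := by
    intro θ τ
    apply strictMonoOn_of_deriv_pos (convex_Ici ρ₀)
    · intro x hx
      have hx0 : (0:ℝ) < x := lt_of_lt_of_le one_pos (le_trans hρ₀1 hx)
      exact (coreF_hasDerivAt m dd b e q θ τ hx0).continuousAt.continuousWithinAt
    · intro x hx
      rw [interior_Ici] at hx
      have hx0 : (0:ℝ) < x := lt_of_lt_of_le one_pos (le_trans hρ₀1 hx.le)
      rw [(coreF_hasDerivAt m dd b e q θ τ hx0).deriv]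
      exact coreD_pos m dd b al Q hdd hb hal e he0 heb q hQ hqQ θ τ
        (le_trans hρ₀1 hx.le) (hkey x hx.le)
  have hupper : ∀ θ τ ρ : ℝ, 1 ≤ ρ →
      coreF m dd b e q ρ θ τ ≤ dd * ρ ^ b + m * (Q * ρ ^ b) := by
    intro θ τ ρ hρ1
    have hρpos : (0:ℝ) < ρ := lt_of_lt_of_le one_pos hρ1
    unfold coreF
    have hsum : ∑ i ∈ Finset.range m, q i θ τ * ρ ^ e i ≤ m * (Q * ρ ^ b) := by
      have h := Finset.sum_le_card_nsmul (Finset.range m)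
        (fun i => q i θ τ * ρ ^ e i) (Q * ρ ^ b) ?_
      · simpa [nsmul_eq_mul] using h
      · intro i hi
        have him : i < m := Finset.mem_range.mp hi
        show q i θ τ * ρ ^ e i ≤ Q * ρ ^ b
        have h1 : ρ ^ e i ≤ ρ ^ b :=
          Real.rpow_le_rpow_of_exponent_le hρ1 (by linarith [heb i him])
        have h2 : q i θ τ ≤ Q := le_of_abs_le (hqQ i him θ τ)
        have h3 : (0:ℝ) ≤ ρ ^ e i := (Real.rpow_pos_of_pos hρpos _).le
        nlinarith [neg_le_of_abs_le (hqQ i him θ τ)]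
    linarith
  have hlow : ∀ θ τ ρ : ℝ, ρ₀ ≤ ρ → ρ ^ (b - al) ≤ coreF m dd b e q ρ θ τ := by
    intro θ τ ρ hρ
    have hρ1 : (1:ℝ) ≤ ρ := le_trans hρ₀1 hρ
    have hρpos : (0:ℝ) < ρ := lt_of_lt_of_le one_pos hρ1
    unfold coreF
    have hsum : -((m:ℝ) * (Q * ρ ^ (b - al))) ≤ ∑ i ∈ Finset.range m, q i θ τ * ρ ^ e i := by
      have h := Finset.card_nsmul_le_sum (Finset.range m)
        (fun i => q i θ τ * ρ ^ e i) (-(Q * ρ ^ (b - al))) ?_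
      · simpa [nsmul_eq_mul] using h
      · intro i hi
        have him : i < m := Finset.mem_range.mp hi
        show -(Q * ρ ^ (b - al)) ≤ q i θ τ * ρ ^ e i
        have h1 : ρ ^ e i ≤ ρ ^ (b - al) :=
          Real.rpow_le_rpow_of_exponent_le hρ1 (heb i him)
        have h3 : (0:ℝ) ≤ ρ ^ e i := (Real.rpow_pos_of_pos hρpos _).le
        nlinarith [neg_le_of_abs_le (hqQ i him θ τ), le_of_abs_le (hqQ i him θ τ)]
    have hid : ρ ^ b = ρ ^ (b - al) * ρ ^ al := by
      rw [← Real.rpow_add hρpos]; ring_nf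
    have hk := hkey ρ hρ
    have hY : (0:ℝ) < ρ ^ (b - al) := Real.rpow_pos_of_pos hρpos _
    rw [hid]
    nlinarith [mul_le_mul_of_nonneg_left hk hY.le]
  set B : ℝ := dd * ρ₀ ^ b + m * (Q * ρ₀ ^ b) with hBdef
  have hB0 : (0:ℝ) ≤ B := by positivity
  have hEU : ∀ I θ τ : ℝ, B < I → ∃! ρ : ℝ, ρ₀ ≤ ρ ∧ coreF m dd b e q ρ θ τ = I := by
    intro I θ τ hBI
    have hfρ₀ : coreF m dd b e q ρ₀ θ τ ≤ B := hupper θ τ ρ₀ hρ₀1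
    set X : ℝ := max ρ₀ ((max I 1) ^ (b - al)⁻¹) with hXdef
    have hρ₀X : ρ₀ ≤ X := le_max_left _ _
    have hfX : I ≤ coreF m dd b e q X θ τ := by
      have hI1 : (0:ℝ) ≤ max I 1 := le_trans zero_le_one (le_max_right _ _)
      have hba : (0:ℝ) < b - al := by linarith
      have h1 : (max I 1) ^ (b - al)⁻¹ ≤ X := le_max_right _ _
      have h2 : ((max I 1) ^ (b - al)⁻¹) ^ (b - al) ≤ X ^ (b - al) :=
        Real.rpow_le_rpow (Real.rpow_nonneg hI1 _) h1 hba.le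
      rw [← Real.rpow_mul hI1, inv_mul_cancel₀ hba.ne', Real.rpow_one] at h2
      have := hlow θ τ X (le_max_left _ _)
      linarith [le_max_left I 1]
    have hcont : ContinuousOn (fun ρ => coreF m dd b e q ρ θ τ) (Set.Icc ρ₀ X) := by
      intro x hx
      have hx0 : (0:ℝ) < x := lt_of_lt_of_le one_pos (le_trans hρ₀1 hx.1)
      exact (coreF_hasDerivAt m dd b e q θ τ hx0).continuousAt.continuousWithinAt
    have hmem : I ∈ Set.Icc (coreF m dd b e q ρ₀ θ τ) (coreF m dd b e q X θ τ) :=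
      ⟨by linarith, hfX⟩
    obtain ⟨ρ, hρmem, hρeq⟩ := intermediate_value_Icc hρ₀X hcont hmem
    refine ⟨ρ, ⟨hρmem.1, hρeq⟩, ?_⟩
    intro y hy
    exact (hmono θ τ).injOn hy.1 hρmem.1 (hy.2.trans hρeq.symm)
  have hgt : ∀ I θ τ ρ : ℝ, B < I → ρ₀ ≤ ρ → coreF m dd b e q ρ θ τ = I → ρ₀ < ρ := by
    intro I θ τ ρ hBI hρ hval
    rcases eq_or_lt_of_le hρ with h | h
    · exfalso
      have := hupper θ τ ρ₀ hρ₀1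
      rw [← h] at hval
      linarith
    · exact h
  set r : ℝ → ℝ → ℝ → ℝ := fun I θ τ =>
    if h : ∃! ρ : ℝ, ρ₀ ≤ ρ ∧ coreF m dd b e q ρ θ τ = I then h.choose else 1 with hrdef
  have hr : ∀ I θ τ : ℝ, B < I → ρ₀ ≤ r I θ τ ∧ coreF m dd b e q (r I θ τ) θ τ = I := by
    intro I θ τ hBI
    have hEUI := hEU I θ τ hBI
    rw [hrdef]
    simp only [dif_pos hEUI]
    exact hEUI.choose_spec.1
  refine ⟨ρ₀, hρ₀1, B + 1, by linarith, ?_, r, ?_, ?_⟩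
  · intro I hI θ τ
    exact hEU I θ τ (by linarith)
  · intro I hI θ τ
    exact hr I θ τ (by linarith)
  · intro τ
    intro z hz
    have hzI : B + 1 ≤ z.1 := (Set.mem_prod.mp hz).1
    have hBz : B < z.1 := by linarith
    obtain ⟨hrge, hrval⟩ := hr z.1 z.2 τ hBz
    set ρs : ℝ := r z.1 z.2 τ with hρsdef
    have hρspos : (0:ℝ) < ρs := lt_of_lt_of_le one_pos (le_trans hρ₀1 hrge)
    have hρsgt : ρ₀ < ρs := hgt z.1 z.2 τ ρs hBz hrge hrval
    set φ : ℝ × ℝ → ℝ := fun w => coreF m dd b e q w.1 w.2 τ with hφdef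
    have hφ : ContDiffAt ℝ 5 φ (ρs, z.2) := by
      rw [hφdef]
      unfold coreF
      apply ContDiffAt.add
      · exact contDiffAt_const.mul
          ((Real.contDiffAt_rpow_const_of_ne hρspos.ne').comp (ρs, z.2) contDiffAt_fst)
      · apply ContDiffAt.sum
        intro i hi
        exact (((hq τ i (Finset.mem_range.mp hi)).contDiffAt).comp (ρs, z.2)
            contDiffAt_snd).mul
          ((Real.contDiffAt_rpow_const_of_ne hρspos.ne').comp (ρs, z.2) contDiffAt_fst)
    set F : ℝ × ℝ → ℝ × ℝ := fun w => (φ w, w.2) with hFdef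
    have hF : ContDiffAt ℝ 5 F (ρs, z.2) := hφ.prodMk contDiffAt_snd
    have hdiff : DifferentiableAt ℝ φ (ρs, z.2) := hφ.differentiableAt (by norm_num)
    set L : ℝ × ℝ →L[ℝ] ℝ := fderiv ℝ φ (ρs, z.2) with hLdef
    have hL : HasFDerivAt φ L (ρs, z.2) := hdiff.hasFDerivAt
    have hL10 : L (1, 0) = coreD m dd b e q ρs z.2 τ := by
      have hcomp : HasDerivAt (fun x : ℝ => φ (x, z.2)) (L (1, 0)) ρs := by
        have := hL.comp_hasDerivAt ρs ((hasDerivAt_id ρs).prodMk (hasDerivAt_const ρs z.2))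
        exact this
      exact hcomp.unique (coreF_hasDerivAt m dd b e q z.2 τ hρspos)
    have hDpos : 0 < coreD m dd b e q ρs z.2 τ :=
      coreD_pos m dd b al Q hdd hb hal e he0 heb q hQ hqQ z.2 τ
        (le_trans hρ₀1 hrge) (hkey ρs hrge)
    set P : ℝ := coreD m dd b e q ρs z.2 τ with hPdef
    set c : ℝ := L (0, 1) with hcdef
    have hLlin : ∀ u v : ℝ, L (u, v) = u * P + v * c := by
      intro u v
      have huv : ((u, v) : ℝ × ℝ) = u • ((1:ℝ), (0:ℝ)) + v • ((0:ℝ), (1:ℝ)) := by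
        simp [Prod.ext_iff]
      rw [huv, map_add, map_smul, map_smul, smul_eq_mul, smul_eq_mul, hL10]
    set M : ℝ × ℝ →L[ℝ] ℝ × ℝ :=
      (P⁻¹ • (ContinuousLinearMap.fst ℝ ℝ ℝ - c • ContinuousLinearMap.snd ℝ ℝ ℝ)).prod
        (ContinuousLinearMap.snd ℝ ℝ ℝ) with hMdef
    set Lf : ℝ × ℝ →L[ℝ] ℝ × ℝ := L.prod (ContinuousLinearMap.snd ℝ ℝ ℝ) with hLfdef
    have hLf : HasFDerivAt F Lf (ρs, z.2) := hL.prodMk (hasFDerivAt_snd)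
    have hMapp : ∀ w : ℝ × ℝ, M w = (P⁻¹ * (w.1 - c * w.2), w.2) := by
      intro w
      simp [hMdef, ContinuousLinearMap.prod_apply, smul_eq_mul]
    have hLfapp : ∀ w : ℝ × ℝ, Lf w = (w.1 * P + w.2 * c, w.2) := by
      intro w
      have : L w = w.1 * P + w.2 * c := by rw [← hLlin]
      simp [hLfdef, ContinuousLinearMap.prod_apply, this]
    have hleft : Function.LeftInverse M Lf := by
      intro w
      rw [hLfapp, hMapp]
      have : P⁻¹ * (w.1 * P + w.2 * c - c * w.2) = w.1 := by
        field_simp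
        ring
      simp [this]
    have hright : Function.RightInverse M Lf := by
      intro w
      rw [hMapp, hLfapp]
      have : P⁻¹ * (w.1 - c * w.2) * P + w.2 * c = w.1 := by
        field_simp
        ring
      simp [this]
    set E : (ℝ × ℝ) ≃L[ℝ] (ℝ × ℝ) := ContinuousLinearEquiv.equivOfInverse Lf M hleft hright
      with hEdef
    have hFd : HasFDerivAt F (E : (ℝ × ℝ) →L[ℝ] (ℝ × ℝ)) (ρs, z.2) := hLf
    have hn1 : (5 : WithTop ℕ∞) ≠ 0 := by norm_num
    set g : ℝ × ℝ → ℝ × ℝ := hF.localInverse hFd hn1 with hgdef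
    have hgC : ContDiffAt ℝ 5 g (F (ρs, z.2)) := hF.to_localInverse hFd hn1
    have hFz : F (ρs, z.2) = z := by
      have h1 : φ (ρs, z.2) = z.1 := hrval
      rw [hFdef]
      simp only []
      rw [h1]
    have hgz : g z = (ρs, z.2) := by
      have := hF.localInverse_apply_image hFd hn1
      rw [hFz] at this
      exact this
    rw [hFz] at hgC
    have hrinv : ∀ᶠ y in nhds z, F (g y) = y := by
      have h := (hF.hasStrictFDerivAt' hFd hn1).eventually_right_inverse
      rw [hFz] at h
      exact h
    have hg1cont : ContinuousAt (fun y => (g y).1) z :=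
      (continuous_fst.continuousAt).comp hgC.continuousAt
    have hev1 : ∀ᶠ y in nhds z, ρ₀ < (g y).1 := by
      apply hg1cont.eventually
      apply isOpen_Ioi.eventually_mem
      show (g z).1 ∈ Set.Ioi ρ₀
      rw [hgz]
      exact hρsgt
    have hev2 : ∀ᶠ y in nhds z, B < y.1 := by
      apply (continuous_fst.continuousAt (x := z)).eventually
      exact isOpen_Ioi.eventually_mem hBz
    have heq : (fun y : ℝ × ℝ => r y.1 y.2 τ) =ᶠ[nhds z] fun y => (g y).1 := by
      filter_upwards [hrinv, hev1, hev2] with y h1 h2 h3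
      have hsnd : (g y).2 = y.2 := by
        have h2' := congrArg Prod.snd h1
        simpa [hFdef] using h2'
      have hval : φ (g y) = y.1 := by
        have h2' := congrArg Prod.fst h1
        simpa [hFdef] using h2'
      have hval2 : coreF m dd b e q (g y).1 y.2 τ = y.1 := by
        rw [← hsnd]; exact hval
      have hEUy := hEU y.1 y.2 τ h3
      show r y.1 y.2 τ = (g y).1
      rw [hrdef]
      simp only [dif_pos hEUy]
      exact (hEUy.choose_spec.2 (g y).1 ⟨h2.le, hval2⟩).symm
    have hgoal : ContDiffAt ℝ 5 (fun y : ℝ × ℝ => r y.1 y.2 τ) z := by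
      apply ContDiffAt.congr_of_eventuallyEq _ heq
      exact contDiffAt_fst.comp z hgC
    exact hgoal.contDiffWithinAt

/-- There exist `ρ₀ ≥ 1` and `I₀ > 0` such that for every `I ≥ I₀` and
every `θ, τ` there is a unique `ρ ≥ ρ₀` with `H₃(ρ, τ, θ) = I`; moreover, writing
`ρ = d^(-1/(2β))·I^(1/(2β)) − R(I, θ, τ)`, for each fixed `τ` the function
`(I, θ) ↦ R(I, θ, τ)` is `C⁵` on `[I₀, ∞) × ℝ`. -/
theorem H3_implicit_function_R
    (n : ℕ) (hn : 1 ≤ n)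
    (C S : ℝ → ℝ)
    (hC' : ∀ t, HasDerivAt C (S t) t)
    (hS' : ∀ t, HasDerivAt S (-(C t ^ (2 * n + 1))) t)
    (hC0 : C 0 = 1) (hS0 : S 0 = 0)
    (T₀ : ℝ) (hT₀pos : 0 < T₀)
    (hCper : Function.Periodic C T₀) (hSper : Function.Periodic S T₀)
    (hT₀min : ∀ T : ℝ, 0 < T → Function.Periodic C T → Function.Periodic S T → T₀ ≤ T)
    (α β a d : ℝ)
    (hα : α = 1 / (n + 2)) (hβ : β = (n + 1) / (n + 2))
    (ha : a = T₀ / α) (hd : d = (2 * a) ^ (2 * β) / (2 * n + 2))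
    (p : ℕ → ℝ → ℝ)
    (hp : ∀ i ≤ 2 * n, ContDiff ℝ 5 (p i))
    (hpper : ∀ i ≤ 2 * n, ∀ t : ℝ, p i (t + 1) = p i t)
    (H₃ : ℝ → ℝ → ℝ → ℝ)
    (hH₃ : ∀ ρ φ t : ℝ, H₃ ρ φ t =
      d * ρ ^ (2 * β) +
        ∑ i ∈ Finset.range (2 * n + 1),
          p i t * (2 * a * ρ) ^ (α * ((i : ℝ) + 1)) *
            C ((φ - ⌊φ⌋) * T₀ / 2) ^ (i + 1) / ((i : ℝ) + 1)) :
    ∃ ρ₀ : ℝ, 1 ≤ ρ₀ ∧ ∃ I₀ : ℝ, 0 < I₀ ∧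
      (∀ I : ℝ, I₀ ≤ I → ∀ θ τ : ℝ, ∃! ρ : ℝ, ρ₀ ≤ ρ ∧ H₃ ρ τ θ = I) ∧
      ∃ R : ℝ → ℝ → ℝ → ℝ,
        (∀ I : ℝ, I₀ ≤ I → ∀ θ τ : ℝ,
          ρ₀ ≤ d ^ (-(1 / (2 * β))) * I ^ (1 / (2 * β)) - R I θ τ ∧
          H₃ (d ^ (-(1 / (2 * β))) * I ^ (1 / (2 * β)) - R I θ τ) τ θ = I) ∧
        (∀ τ : ℝ, ContDiffOn ℝ 5 (fun q : ℝ × ℝ => R q.1 q.2 τ)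
          (Set.Ici I₀ ×ˢ (Set.univ : Set ℝ))) := by
  have hn2 : (0:ℝ) < (n:ℝ) + 2 := by positivity
  have hn1 : (1:ℝ) ≤ (n:ℝ) := by exact_mod_cast hn
  have hα0 : 0 < α := by rw [hα]; positivity
  have ha0 : 0 < a := by rw [ha]; exact div_pos hT₀pos hα0
  have h2a : (0:ℝ) < 2 * a := by linarith
  have h2b : 2 * β = (2 * (n:ℝ) + 2) / ((n:ℝ) + 2) := by rw [hβ]; ring
  have hb : 1 < 2 * β := by rw [h2b, lt_div_iff₀ hn2]; linarith
  have h2β2 : 2 * β ≤ 2 := by rw [h2b, div_le_iff₀ hn2]; linarith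
  have hd0 : 0 < d := by
    rw [hd]
    apply div_pos (Real.rpow_pos_of_pos h2a _)
    positivity
  have halb : α < 2 * β := by
    rw [hα, h2b, div_lt_div_iff₀ hn2 hn2]
    nlinarith
  have hsum2β : 2 * β = α * (2 * (n:ℝ) + 2) := by
    rw [hα, h2b]; field_simp
  -- bound for C
  have hCcont : Continuous C := by
    have : Differentiable ℝ C := fun t => (hC' t).differentiableAt
    exact this.continuous
  obtain ⟨Mc, hMc⟩ := (isCompact_Icc : IsCompact (Set.Icc (0:ℝ) T₀)).exists_bound_of_continuousOn
    hCcont.continuousOn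
  have hMcval : ∀ τ : ℝ, |C ((τ - ⌊τ⌋) * T₀ / 2)| ≤ max 1 Mc := by
    intro τ
    have hf0 : 0 ≤ τ - ⌊τ⌋ := by linarith [Int.floor_le τ]
    have hf1 : τ - ⌊τ⌋ ≤ 1 := by linarith [Int.lt_floor_add_one τ]
    have hmem : (τ - ⌊τ⌋) * T₀ / 2 ∈ Set.Icc (0:ℝ) T₀ := by
      constructor
      · positivity
      · nlinarith
    calc |C ((τ - ⌊τ⌋) * T₀ / 2)| ≤ Mc := by
          rw [← Real.norm_eq_abs]; exact hMc _ hmem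
    _ ≤ max 1 Mc := le_max_right _ _
  -- bound for p
  have hgs : Continuous (fun t => ∑ i ∈ Finset.range (2*n+1), |p i t|) := by
    apply continuous_finset_sum
    intro i hi
    exact ((hp i (by have := Finset.mem_range.mp hi; omega)).continuous).abs
  obtain ⟨Mp, hMp⟩ := (isCompact_Icc : IsCompact (Set.Icc (0:ℝ) 1)).exists_bound_of_continuousOn
    hgs.continuousOn
  have hpbound : ∀ i < 2*n+1, ∀ θ : ℝ, |p i θ| ≤ max 0 Mp := by
    intro i hi θ
    have hi' : i ≤ 2*n := by omega
    have hper : Function.Periodic (p i) 1 := fun t => hpper i hi' t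
    have hper2 : p i (θ - ⌊θ⌋) = p i θ := by
      have := hper.sub_int_mul_eq (x := θ) ⌊θ⌋
      simpa using this
    have hf0 : 0 ≤ θ - ⌊θ⌋ := by linarith [Int.floor_le θ]
    have hf1 : θ - ⌊θ⌋ ≤ 1 := by linarith [Int.lt_floor_add_one θ]
    have hmem : θ - ⌊θ⌋ ∈ Set.Icc (0:ℝ) 1 := ⟨hf0, hf1⟩
    have hsingle : |p i (θ - ⌊θ⌋)| ≤ ∑ j ∈ Finset.range (2*n+1), |p j (θ - ⌊θ⌋)| :=
      Finset.single_le_sum (f := fun j => |p j (θ - (⌊θ⌋:ℤ))|) (fun j _ => abs_nonneg _)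
        (Finset.mem_range.mpr hi)
    have hnorm := hMp _ hmem
    rw [Real.norm_eq_abs] at hnorm
    have : ∑ j ∈ Finset.range (2*n+1), |p j (θ - ⌊θ⌋)| ≤ Mp :=
      le_trans (le_abs_self _) hnorm
    rw [← hper2]
    calc |p i (θ - ⌊θ⌋)| ≤ Mp := le_trans hsingle this
    _ ≤ max 0 Mp := le_max_right _ _
  -- setup for core
  set e : ℕ → ℝ := fun i => α * ((i:ℝ) + 1) with hedef
  set qq : ℕ → ℝ → ℝ → ℝ := fun i θ τ =>
    p i θ * ((2 * a) ^ (α * ((i:ℝ) + 1)) * C ((τ - ⌊τ⌋) * T₀ / 2) ^ (i + 1) / ((i:ℝ) + 1))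
    with hqqdef
  set Q : ℝ := (max 0 Mp) * ((max 1 (2*a)) ^ (2:ℝ) * (max 1 Mc) ^ (2*n+1)) with hQdef
  have hQ0 : 0 ≤ Q := by
    have h1 : (0:ℝ) < (max 1 (2*a)) ^ (2:ℝ) := Real.rpow_pos_of_pos (by positivity) _
    have h2 : (0:ℝ) < (max 1 Mc) ^ (2*n+1) := by positivity
    positivity
  have he0 : ∀ i < 2*n+1, 0 < e i := by
    intro i hi
    rw [hedef]
    positivity
  have heb : ∀ i < 2*n+1, e i ≤ 2 * β - α := by
    intro i hi
    have hicast : (i:ℝ) ≤ 2*(n:ℝ) := by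
      have : (i:ℝ) ≤ ((2*n : ℕ) : ℝ) := by exact_mod_cast Nat.lt_succ_iff.mp hi
      simpa using this
    have : e i = α * ((i:ℝ) + 1) := rfl
    rw [this, hsum2β]
    nlinarith
  have hqsm : ∀ τ : ℝ, ∀ i < 2*n+1, ContDiff ℝ 5 (fun θ => qq i θ τ) := by
    intro τ i hi
    exact (hp i (by omega)).mul contDiff_const
  have hqQ : ∀ i < 2*n+1, ∀ θ τ : ℝ, |qq i θ τ| ≤ Q := by
    intro i hi θ τ
    have hipos : (0:ℝ) < (i:ℝ) + 1 := by positivity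
    have hrpos : (0:ℝ) < (2*a) ^ (α * ((i:ℝ)+1)) := Real.rpow_pos_of_pos h2a _
    have he2 : α * ((i:ℝ)+1) ≤ 2 := by
      have := heb i hi
      have h' : e i = α * ((i:ℝ)+1) := rfl
      rw [h'] at this
      linarith
    have hr1 : (2*a) ^ (α * ((i:ℝ)+1)) ≤ (max 1 (2*a)) ^ (2:ℝ) := by
      calc (2*a) ^ (α * ((i:ℝ)+1)) ≤ (max 1 (2*a)) ^ (α * ((i:ℝ)+1)) :=
            Real.rpow_le_rpow h2a.le (le_max_right _ _) (by positivity)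
      _ ≤ (max 1 (2*a)) ^ (2:ℝ) :=
            Real.rpow_le_rpow_of_exponent_le (le_max_left _ _) he2
    have hc1 : |C ((τ - ⌊τ⌋) * T₀ / 2)| ^ (i+1) ≤ (max 1 Mc) ^ (2*n+1) := by
      calc |C ((τ - ⌊τ⌋) * T₀ / 2)| ^ (i+1) ≤ (max 1 Mc) ^ (i+1) :=
            pow_le_pow_left₀ (abs_nonneg _) (hMcval τ) _
      _ ≤ (max 1 Mc) ^ (2*n+1) := pow_le_pow_right₀ (le_max_left _ _) (by omega)
    have hterm : |(2 * a) ^ (α * ((i:ℝ) + 1)) * C ((τ - ⌊τ⌋) * T₀ / 2) ^ (i + 1) / ((i:ℝ) + 1)|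
        ≤ (max 1 (2*a)) ^ (2:ℝ) * (max 1 Mc) ^ (2*n+1) := by
      rw [abs_div, abs_mul, abs_pow, abs_of_pos hrpos, abs_of_pos hipos]
      apply le_trans (div_le_self (by positivity) (by linarith))
      apply mul_le_mul hr1 hc1 (by positivity) (by positivity)
    rw [hqqdef]
    simp only []
    rw [abs_mul]
    exact mul_le_mul (hpbound i hi θ) hterm (abs_nonneg _) (le_max_left _ _)
  obtain ⟨ρ₀, hρ₀1, I₀, hI₀1, hEU, r, hrr, hrs⟩ :=
    core (2*n+1) d (2*β) α Q hd0 hb hα0 halb e he0 heb qq hqsm hQ0 hqQ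
  have hH₃eq : ∀ ρ θ τ : ℝ, 0 ≤ ρ → H₃ ρ τ θ = coreF (2*n+1) d (2*β) e qq ρ θ τ := by
    intro ρ θ τ hρ0
    rw [hH₃]
    unfold coreF
    congr 1
    apply Finset.sum_congr rfl
    intro i hi
    rw [Real.mul_rpow h2a.le hρ0]
    show p i θ * ((2*a) ^ (α * ((i:ℝ)+1)) * ρ ^ (α * ((i:ℝ)+1))) * C ((τ - ⌊τ⌋) * T₀ / 2) ^ (i+1) / ((i:ℝ)+1)
      = qq i θ τ * ρ ^ (e i)
    rw [hqqdef, hedef]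
    ring
  refine ⟨ρ₀, hρ₀1, I₀, by linarith, ?_, fun I θ τ => d ^ (-(1/(2*β))) * I ^ (1/(2*β)) - r I θ τ, ?_, ?_⟩
  · intro I hI θ τ
    obtain ⟨ρ, ⟨h1, h2⟩, hu⟩ := hEU I hI θ τ
    refine ⟨ρ, ⟨h1, ?_⟩, ?_⟩
    · rw [hH₃eq ρ θ τ (by linarith)]
      exact h2
    · rintro y ⟨hy1, hy2⟩
      apply hu y
      refine ⟨hy1, ?_⟩
      rw [← hH₃eq y θ τ (by linarith)]
      exact hy2
  · intro I hI θ τ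
    have hsub : d ^ (-(1/(2*β))) * I ^ (1/(2*β)) -
        (d ^ (-(1/(2*β))) * I ^ (1/(2*β)) - r I θ τ) = r I θ τ := by ring
    rw [hsub]
    obtain ⟨h1, h2⟩ := hrr I hI θ τ
    refine ⟨h1, ?_⟩
    rw [hH₃eq _ θ τ (by linarith)]
    exact h2
  · intro τ
    have h1 : ContDiffOn ℝ 5 (fun zz : ℝ × ℝ => d ^ (-(1/(2*β))) * zz.1 ^ (1/(2*β)))
        (Set.Ici I₀ ×ˢ (Set.univ : Set ℝ)) := by
      intro w hw
      have hw1 : (0:ℝ) < w.1 := lt_of_lt_of_le one_pos (le_trans hI₀1 (Set.mem_prod.mp hw).1)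
      exact (contDiffAt_const.mul
        ((Real.contDiffAt_rpow_const_of_ne hw1.ne').comp w contDiffAt_fst)).contDiffWithinAt
    exact h1.sub (hrs τ)
end

section
/- There exist I₁ ≥ I₀ and a constant K > 0 such that |R(I, θ, τ)| ≤ K · I^{1/2} for all I ≥ I₁ and all θ, τ ∈ ℝ. -/
lemma rpow_mvt_bound {c x y s : ℝ} (hc : 0 < c) (hx : c ≤ x) (hy : c ≤ y)
    (hs0 : 0 ≤ s) (hs1 : s ≤ 1) : |x ^ s - y ^ s| ≤ s * c ^ (s - 1) * |x - y| := by
  have key := Convex.norm_image_sub_le_of_norm_hasDerivWithin_le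
    (f := fun z : ℝ => z ^ s) (f' := fun z : ℝ => s * z ^ (s - 1))
    (s := Set.Ici c) (C := s * c ^ (s - 1))
    (fun z hz => (Real.hasDerivAt_rpow_const
      (Or.inl (ne_of_gt (lt_of_lt_of_le hc hz)))).hasDerivWithinAt)
    (fun z hz => ?_) (convex_Ici c) hy hx
  · simpa [Real.norm_eq_abs] using key
  · have hz0 : (0:ℝ) < z := lt_of_lt_of_le hc hz
    have h1 : z ^ (s - 1) ≤ c ^ (s - 1) :=
      Real.rpow_le_rpow_of_nonpos hc hz (by linarith)
    have h2 : (0:ℝ) ≤ z ^ (s - 1) := Real.rpow_nonneg hz0.le _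
    rw [Real.norm_eq_abs, abs_mul, abs_of_nonneg hs0, abs_of_nonneg h2]
    exact mul_le_mul_of_nonneg_left h1 hs0

set_option maxHeartbeats 3200000 in
/-- There exist `I₁ ≥ I₀` and a constant `K > 0` such that
`|R(I, θ, τ)| ≤ K · I^(1/2)` for all `I ≥ I₁` and all `θ, τ ∈ ℝ`. -/
theorem R_growth_estimate
    (n : ℕ) (hn : 1 ≤ n)
    (C S : ℝ → ℝ)
    (hC' : ∀ t, HasDerivAt C (S t) t)
    (hS' : ∀ t, HasDerivAt S (-(C t ^ (2 * n + 1))) t)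
    (hC0 : C 0 = 1) (hS0 : S 0 = 0)
    (T₀ : ℝ) (hT₀pos : 0 < T₀)
    (hCper : Function.Periodic C T₀) (hSper : Function.Periodic S T₀)
    (hT₀min : ∀ T : ℝ, 0 < T → Function.Periodic C T → Function.Periodic S T → T₀ ≤ T)
    (α β a d : ℝ)
    (hα : α = 1 / (n + 2)) (hβ : β = (n + 1) / (n + 2))
    (ha : a = T₀ / α) (hd : d = (2 * a) ^ (2 * β) / (2 * n + 2))
    (p : ℕ → ℝ → ℝ)
    (hp : ∀ i ≤ 2 * n, ContDiff ℝ 5 (p i))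
    (hpper : ∀ i ≤ 2 * n, ∀ t : ℝ, p i (t + 1) = p i t)
    (H₃ : ℝ → ℝ → ℝ → ℝ)
    (hH₃ : ∀ ρ φ t : ℝ, H₃ ρ φ t =
      d * ρ ^ (2 * β) +
        ∑ i ∈ Finset.range (2 * n + 1),
          p i t * (2 * a * ρ) ^ (α * ((i : ℝ) + 1)) *
            C ((φ - ⌊φ⌋) * T₀ / 2) ^ (i + 1) / ((i : ℝ) + 1))
    (I₀ : ℝ) (hI₀ : 0 < I₀)
    (R : ℝ → ℝ → ℝ → ℝ)
    (hR : ∀ I : ℝ, I₀ ≤ I → ∀ θ τ : ℝ,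
      0 < d ^ (-(1 / (2 * β))) * I ^ (1 / (2 * β)) - R I θ τ ∧
      H₃ (d ^ (-(1 / (2 * β))) * I ^ (1 / (2 * β)) - R I θ τ) τ θ = I)
    (hRC5 : ∀ τ : ℝ, ContDiffOn ℝ 5 (fun q : ℝ × ℝ => R q.1 q.2 τ)
      (Set.Ici I₀ ×ˢ (Set.univ : Set ℝ))) :
    ∃ I₁ : ℝ, I₀ ≤ I₁ ∧ ∃ K : ℝ, 0 < K ∧
      ∀ I : ℝ, I₁ ≤ I → ∀ θ τ : ℝ, |R I θ τ| ≤ K * I ^ ((1 : ℝ) / 2) := by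
  -- basic positivity and arithmetic of exponents
  have hN1 : (1:ℝ) ≤ (n:ℝ) := by exact_mod_cast hn
  have hN2 : (0:ℝ) < (n:ℝ) + 2 := by linarith
  have h2N2 : (0:ℝ) < 2*(n:ℝ) + 2 := by linarith
  have hN2ne : ((n:ℝ) + 2) ≠ 0 := ne_of_gt hN2
  have h2N2ne : (2*(n:ℝ) + 2) ≠ 0 := ne_of_gt h2N2
  have hαpos : 0 < α := by rw [hα]; positivity
  have hβpos : 0 < β := by rw [hβ]; positivity
  have hapos : 0 < a := by rw [ha]; exact div_pos hT₀pos hαpos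
  have h2a : (0:ℝ) < 2 * a := by linarith
  have hdpos : 0 < d := by
    rw [hd]; exact div_pos (Real.rpow_pos_of_pos h2a _) (by positivity)
  set s := 1 / (2*β) with hs_def
  clear_value s
  have h2βpos : 0 < 2*β := by linarith
  have hspos : 0 < s := by rw [hs_def]; positivity
  have hsval : s = ((n:ℝ)+2) / (2*(n:ℝ)+2) := by
    rw [hs_def, hβ]; rw [div_eq_div_iff (by positivity) (by positivity)]
    field_simp
  have hs1 : s ≤ 1 := by rw [hsval, div_le_one h2N2]; linarith
  set g := α * (2*(n:ℝ)+1) with hg_def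
  clear_value g
  have hgval : g = (2*(n:ℝ)+1)/((n:ℝ)+2) := by rw [hg_def, hα]; field_simp
  have hgpos : 0 < g := by rw [hgval]; positivity
  have hsg : s * g = (2*(n:ℝ)+1)/(2*(n:ℝ)+2) := by
    rw [hsval, hgval, div_mul_div_comm, div_eq_div_iff (by positivity) (by positivity)]
    ring
  have hsg1 : s * g < 1 := by rw [hsg, div_lt_one h2N2]; linarith
  have hsgpos : 0 < s * g := mul_pos hspos hgpos
  set e := 1 - s*g with he_def
  clear_value e
  have hepos : 0 < e := by rw [he_def]; linarith
  have hkey : s - 1 + s * g = 1/2 := by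
    rw [hsg, hsval]
    field_simp
    ring
  have h2βs : (2*β) * s = 1 := by
    rw [hs_def]; field_simp
  have hgα : g + α = 2*β := by
    rw [hgval, hα, hβ]
    field_simp
    ring
  -- bound for C on the relevant compact set
  have hCc : Continuous C :=
    continuous_iff_continuousAt.mpr fun t => (hC' t).differentiableAt.continuousAt
  obtain ⟨Mc, hMc⟩ := (isCompact_Icc (a := (0:ℝ)) (b := T₀/2)).exists_bound_of_continuousOn
    hCc.continuousOn
  set Mc1 := max Mc 1 with hMc1_def
  clear_value Mc1
  have hMc1 : (1:ℝ) ≤ Mc1 := by rw [hMc1_def]; exact le_max_right _ _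
  have hMcbd : ∀ φ : ℝ, |C ((φ - ⌊φ⌋) * T₀ / 2)| ≤ Mc1 := by
    intro φ
    have h1 : (0:ℝ) ≤ φ - ⌊φ⌋ := by rw [Int.self_sub_floor]; exact Int.fract_nonneg φ
    have h2 : (φ:ℝ) - ⌊φ⌋ ≤ 1 := by rw [Int.self_sub_floor]; exact (Int.fract_lt_one φ).le
    have hmem : (φ - ⌊φ⌋) * T₀ / 2 ∈ Set.Icc (0:ℝ) (T₀/2) := by
      constructor
      · positivity
      · rw [div_le_div_iff_of_pos_right (by norm_num)]
        nlinarith [hT₀pos, h1, h2]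
    have := hMc _ hmem
    rw [Real.norm_eq_abs] at this
    rw [hMc1_def]
    exact this.trans (le_max_left _ _)
  -- bound for the p i
  have hpb : ∀ i : ℕ, ∃ b : ℝ, ∀ t : ℝ, i ≤ 2*n → |p i t| ≤ b := by
    intro i
    by_cases hi : i ≤ 2*n
    · obtain ⟨b, hb⟩ := (isCompact_Icc (a := (0:ℝ)) (b := 1)).exists_bound_of_continuousOn
        ((hp i hi).continuous.continuousOn)
      refine ⟨b, fun t _ => ?_⟩
      have hper : Function.Periodic (p i) 1 := hpper i hi
      have heq : p i (t - (⌊t⌋ : ℤ) • (1:ℝ)) = p i t := hper.sub_zsmul_eq ⌊t⌋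
      have heq' : p i (Int.fract t) = p i t := by
        rw [← Int.self_sub_floor]
        simpa [zsmul_eq_mul] using heq
      have hmem : Int.fract t ∈ Set.Icc (0:ℝ) 1 :=
        ⟨Int.fract_nonneg t, (Int.fract_lt_one t).le⟩
      have := hb _ hmem
      rw [Real.norm_eq_abs, heq'] at this
      exact this
    · exact ⟨0, fun t hti => absurd hti hi⟩
  choose bb hbb using hpb
  have hne : (Finset.range (2*n+1)).Nonempty := ⟨0, Finset.mem_range.mpr (by omega)⟩
  set Mp := 1 + (Finset.range (2*n+1)).sup' hne (fun i => |bb i|) with hMp_def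
  clear_value Mp
  have hsupnn : (0:ℝ) ≤ (Finset.range (2*n+1)).sup' hne (fun i => |bb i|) := by
    obtain ⟨j, hj⟩ := hne
    exact le_trans (abs_nonneg (bb j)) (Finset.le_sup' (fun i => |bb i|) hj)
  have hMp1 : (1:ℝ) ≤ Mp := by rw [hMp_def]; linarith
  have hMppos : (0:ℝ) < Mp := lt_of_lt_of_le one_pos hMp1
  have hMpbd : ∀ i ≤ 2*n, ∀ t : ℝ, |p i t| ≤ Mp := by
    intro i hi t
    refine (hbb i t hi).trans ((le_abs_self _).trans ?_)
    have hmem : i ∈ Finset.range (2*n+1) := Finset.mem_range.mpr (Nat.lt_succ_of_le hi)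
    have := Finset.le_sup' (fun j => |bb j|) hmem
    rw [hMp_def]; linarith
  -- the constants
  set M0 : ℝ := (2*(n:ℝ)+1) * Mp * Mc1^(2*n+1) with hM0_def
  clear_value M0
  have hM0pos : 0 < M0 := by
    rw [hM0_def]
    have : (0:ℝ) < Mc1 := lt_of_lt_of_le one_pos hMc1
    positivity
  set M : ℝ := M0 * (2*a) ^ g with hM_def
  clear_value M
  have hMpos : 0 < M := by rw [hM_def]; exact mul_pos hM0pos (Real.rpow_pos_of_pos h2a _)
  set M₁ : ℝ := M * (2/d) ^ (s*g) with hM₁_def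
  clear_value M₁
  have hM₁pos : 0 < M₁ := by rw [hM₁_def]; exact mul_pos hMpos (Real.rpow_pos_of_pos (by positivity) _)
  set ρmin : ℝ := 1/(2*a) with hρmin_def
  clear_value ρmin
  have hρminpos : 0 < ρmin := by rw [hρmin_def]; positivity
  set r0 : ℝ := (2*M/d) ^ (1/α) with hr0_def
  clear_value r0
  have hr0nn : 0 ≤ r0 := by rw [hr0_def]; exact Real.rpow_nonneg (by positivity) _
  set I₁ : ℝ := max I₀ (max (d * ρmin^(2*β) + M0 + 1)
    (max ((d/2) * r0^(2*β)) ((2*M₁)^(1/e)))) with hI₁_def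
  clear_value I₁
  have hI₁I₀ : I₀ ≤ I₁ := by rw [hI₁_def]; exact le_max_left _ _
  set K : ℝ := d ^ (-s) * (s * (2:ℝ)^(1-s) * M₁) with hK_def
  clear_value K
  have hKpos : 0 < K := by
    rw [hK_def]
    have h1 : (0:ℝ) < d ^ (-s) := Real.rpow_pos_of_pos hdpos _
    have h2 : (0:ℝ) < (2:ℝ)^(1-s) := Real.rpow_pos_of_pos (by norm_num) _
    positivity
  refine ⟨I₁, hI₁I₀, K, hKpos, ?_⟩
  intro I hI θ τ
  have hI0le : I₀ ≤ I := hI₁I₀.trans hI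
  have hIpos : 0 < I := lt_of_lt_of_le hI₀ hI0le
  obtain ⟨hρpos, hHeq⟩ := hR I hI0le θ τ
  set ρ : ℝ := d ^ (-s) * I ^ s - R I θ τ with hρ_def
  clear_value ρ
  rw [hH₃] at hHeq
  set Esum : ℝ := ∑ i ∈ Finset.range (2 * n + 1),
      p i θ * (2 * a * ρ) ^ (α * ((i : ℝ) + 1)) *
        C ((τ - ⌊τ⌋) * T₀ / 2) ^ (i + 1) / ((i : ℝ) + 1) with hE_def
  clear_value Esum
  -- generic bound on the sum
  have hEgen : ∀ Q : ℝ, (∀ i : ℕ, i ≤ 2*n → (2*a*ρ) ^ (α*((i:ℝ)+1)) ≤ Q) →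
      |Esum| ≤ M0 * Q := by
    intro Q hQ
    have hQ0 : 0 ≤ Q :=
      le_trans (Real.rpow_nonneg (mul_nonneg h2a.le hρpos.le) _) (hQ 0 (Nat.zero_le _))
    rw [hE_def]
    refine (Finset.abs_sum_le_sum_abs _ _).trans ?_
    have hterm : ∀ i ∈ Finset.range (2*n+1),
        |p i θ * (2 * a * ρ) ^ (α * ((i : ℝ) + 1)) *
          C ((τ - ⌊τ⌋) * T₀ / 2) ^ (i + 1) / ((i : ℝ) + 1)| ≤ Mp * Mc1^(2*n+1) * Q := by
      intro i hi
      have hile : i ≤ 2*n := Nat.lt_succ_iff.mp (Finset.mem_range.mp hi)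
      have hAnn : (0:ℝ) ≤ (2*a*ρ) ^ (α*((i:ℝ)+1)) := Real.rpow_nonneg (mul_nonneg h2a.le hρpos.le) _
      have hip : (0:ℝ) < (i:ℝ) + 1 := by positivity
      have habs : |p i θ * (2 * a * ρ) ^ (α * ((i : ℝ) + 1)) *
          C ((τ - ⌊τ⌋) * T₀ / 2) ^ (i + 1) / ((i : ℝ) + 1)|
          = |p i θ| * (2 * a * ρ) ^ (α * ((i : ℝ) + 1)) *
            |C ((τ - ⌊τ⌋) * T₀ / 2)| ^ (i + 1) / ((i : ℝ) + 1) := by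
        rw [abs_div, abs_mul, abs_mul, abs_of_nonneg hAnn, abs_pow, abs_of_pos hip]
      rw [habs]
      have hCp : |C ((τ - ⌊τ⌋) * T₀ / 2)| ^ (i + 1) ≤ Mc1^(2*n+1) := by
        calc |C ((τ - ⌊τ⌋) * T₀ / 2)| ^ (i + 1) ≤ Mc1 ^ (i+1) :=
              pow_le_pow_left₀ (abs_nonneg _) (hMcbd τ) _
          _ ≤ Mc1 ^ (2*n+1) := pow_le_pow_right₀ hMc1 (by omega)
      have hnum : |p i θ| * (2*a*ρ) ^ (α*((i:ℝ)+1)) * |C ((τ - ⌊τ⌋) * T₀ / 2)| ^ (i + 1)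
          ≤ Mp * Q * Mc1^(2*n+1) := by
        apply mul_le_mul _ hCp (pow_nonneg (abs_nonneg _) _) (by positivity)
        exact mul_le_mul (hMpbd i hile θ) (hQ i hile) hAnn hMppos.le
      calc |p i θ| * (2*a*ρ) ^ (α*((i:ℝ)+1)) * |C ((τ - ⌊τ⌋) * T₀ / 2)| ^ (i + 1) / ((i:ℝ)+1)
          ≤ |p i θ| * (2*a*ρ) ^ (α*((i:ℝ)+1)) * |C ((τ - ⌊τ⌋) * T₀ / 2)| ^ (i + 1) := by
            apply div_le_self (by positivity) (by linarith)
        _ ≤ Mp * Q * Mc1^(2*n+1) := hnum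
        _ = Mp * Mc1^(2*n+1) * Q := by ring
    refine (Finset.sum_le_sum hterm).trans ?_
    rw [Finset.sum_const, Finset.card_range, nsmul_eq_mul]
    apply le_of_eq
    rw [hM0_def]
    push_cast
    ring
  
  -- components of I₁
  have hI₁A : d * ρmin^(2*β) + M0 + 1 ≤ I₁ := by
    rw [hI₁_def]; exact le_max_of_le_right (le_max_left _ _)
  have hI₁B : (d/2) * r0^(2*β) ≤ I₁ := by
    rw [hI₁_def]; exact le_max_of_le_right (le_max_of_le_right (le_max_left _ _))
  have hI₁C : (2*M₁)^(1/e) ≤ I₁ := by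
    rw [hI₁_def]; exact le_max_of_le_right (le_max_of_le_right (le_max_right _ _))
  have hm : 2*a*ρmin = 1 := by rw [hρmin_def]; field_simp
  -- Step 1 : ρmin ≤ ρ
  have hρge : ρmin ≤ ρ := by
    by_contra hlt
    push_neg at hlt
    have h2aρ : 2*a*ρ ≤ 1 := by
      have h := mul_le_mul_of_nonneg_left hlt.le h2a.le
      linarith only [h, hm]
    have hEb : |Esum| ≤ M0 * 1 :=
      hEgen 1 (fun i _ => Real.rpow_le_one (mul_nonneg h2a.le hρpos.le) h2aρ
        (mul_nonneg hαpos.le (by positivity)))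
    have hd1 : d * ρ^(2*β) ≤ d * ρmin^(2*β) :=
      mul_le_mul_of_nonneg_left (Real.rpow_le_rpow hρpos.le hlt.le h2βpos.le) hdpos.le
    have hle := le_abs_self Esum
    linarith only [hI₁A, hI, hd1, hEb, hle, hHeq]
  have h2aρ1 : (1:ℝ) ≤ 2*a*ρ := by
    have h := mul_le_mul_of_nonneg_left hρge h2a.le
    linarith only [h, hm]
  -- Step 2: the good bound on Esum
  have hEb2 : |Esum| ≤ M * ρ^g := by
    have key := hEgen ((2*a*ρ)^g) (fun i hile => by
      apply Real.rpow_le_rpow_of_exponent_le h2aρ1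
      rw [hg_def]
      have h1 : (i:ℝ) ≤ 2*(n:ℝ) := by exact_mod_cast hile
      have h2 : (i:ℝ)+1 ≤ 2*(n:ℝ)+1 := by linarith
      exact mul_le_mul_of_nonneg_left h2 hαpos.le)
    calc |Esum| ≤ M0 * (2*a*ρ)^g := key
      _ = M0 * ((2*a)^g * ρ^g) := by rw [Real.mul_rpow h2a.le hρpos.le]
      _ = M * ρ^g := by rw [hM_def]; ring
  -- Step 3: upper bound for ρ
  have hρle : ρ ≤ (2*I/d)^s := by
    rcases le_or_gt ρ r0 with hc | hc
    · refine hc.trans ?_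
      have h1 : r0^(2*β) ≤ 2*I/d := by
        rw [le_div_iff₀ hdpos]
        linarith only [hI₁B, hI]
      calc r0 = (r0^(2*β))^s := by rw [← Real.rpow_mul hr0nn, h2βs, Real.rpow_one]
        _ ≤ (2*I/d)^s := Real.rpow_le_rpow (Real.rpow_nonneg hr0nn _) h1 hspos.le
    · have hρα : 2*M/d ≤ ρ^α := by
        calc 2*M/d = ((2*M/d)^(1/α))^α := by
              rw [← Real.rpow_mul (div_nonneg (by linarith) hdpos.le),
                one_div_mul_cancel (ne_of_gt hαpos), Real.rpow_one]
          _ = r0^α := by rw [hr0_def]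
          _ ≤ ρ^α := Real.rpow_le_rpow hr0nn hc.le hαpos.le
      have hsplit : ρ^(2*β) = ρ^g * ρ^α := by
        rw [← Real.rpow_add hρpos, hgα]
      have h4 : M ≤ (d/2) * ρ^α := by
        have h5 : (d/2) * (2*M/d) ≤ (d/2) * ρ^α :=
          mul_le_mul_of_nonneg_left hρα (by positivity)
        have h6 : (d/2) * (2*M/d) = M := by field_simp
        linarith only [h5, h6]
      have hMle : M * ρ^g ≤ (d/2) * ρ^(2*β) := by
        rw [hsplit]
        calc M * ρ^g = ρ^g * M := by ring
          _ ≤ ρ^g * ((d/2)*ρ^α) :=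
              mul_le_mul_of_nonneg_left h4 (Real.rpow_nonneg hρpos.le _)
          _ = (d/2) * (ρ^g * ρ^α) := by ring
      have h6 := neg_abs_le Esum
      have h7 : ρ^(2*β) ≤ 2*I/d := by
        rw [le_div_iff₀ hdpos]
        linarith only [hHeq, h6, hEb2, hMle]
      calc ρ = (ρ^(2*β))^s := by rw [← Real.rpow_mul hρpos.le, h2βs, Real.rpow_one]
        _ ≤ (2*I/d)^s := Real.rpow_le_rpow (Real.rpow_nonneg hρpos.le _) h7 hspos.le
  -- Step 4: |Esum| ≤ M₁ I^(s g) ≤ I/2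
  have hEb3 : |Esum| ≤ M₁ * I^(s*g) := by
    have h1 : ρ^g ≤ ((2*I/d)^s)^g :=
      Real.rpow_le_rpow hρpos.le hρle hgpos.le
    have h2 : ((2*I/d)^s)^g = (2*I/d)^(s*g) := by
      rw [← Real.rpow_mul (by positivity)]
    have h3 : (2*I/d)^(s*g) = (2/d)^(s*g) * I^(s*g) := by
      rw [← Real.mul_rpow (by positivity) hIpos.le]
      congr 1
      ring
    calc |Esum| ≤ M * ρ^g := hEb2
      _ ≤ M * ((2/d)^(s*g) * I^(s*g)) := by
          rw [← h3, ← h2]; exact mul_le_mul_of_nonneg_left h1 hMpos.le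
      _ = M₁ * I^(s*g) := by rw [hM₁_def]; ring
  have hIe : 2*M₁ ≤ I^e := by
    calc 2*M₁ = ((2*M₁)^(1/e))^e := by
          rw [← Real.rpow_mul (by linarith only [hM₁pos] : (0:ℝ) ≤ 2*M₁),
            one_div_mul_cancel (ne_of_gt hepos), Real.rpow_one]
      _ ≤ I^e := Real.rpow_le_rpow (Real.rpow_nonneg (by linarith only [hM₁pos]) _)
            (hI₁C.trans hI) hepos.le
  have hEhalf : |Esum| ≤ I/2 := by
    have h3 : I^(s*g) * I^e = I := by
      rw [← Real.rpow_add hIpos, he_def, show s*g + (1 - s*g) = (1:ℝ) by ring,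
        Real.rpow_one]
    have h2 : M₁ * I^(s*g) ≤ I/2 := by
      linarith only [h3, mul_nonneg (sub_nonneg.mpr hIe) (Real.rpow_nonneg hIpos.le (s*g))]
    exact hEb3.trans h2
  -- Step 5: conclude via the mean value theorem
  have hIE : I/2 ≤ I - Esum := by
    have h := le_abs_self Esum; linarith only [h, hEhalf]
  have hρeq : ρ = ((I - Esum)/d)^s := by
    have h1 : ρ^(2*β) = (I - Esum)/d := by
      rw [eq_div_iff (ne_of_gt hdpos)]
      linarith only [hHeq]
    rw [← h1, ← Real.rpow_mul hρpos.le, h2βs, Real.rpow_one]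
  have hdiv : ((I - Esum)/d)^s = (I - Esum)^s * d^(-s) := by
    rw [Real.div_rpow (by linarith only [hIE, hIpos]) hdpos.le, Real.rpow_neg hdpos.le, div_eq_mul_inv]
  have hRval : R I θ τ = d^(-s) * (I^s - (I - Esum)^s) := by
    have h1 : R I θ τ = d^(-s) * I^s - ρ := by rw [hρ_def]; ring
    rw [h1, hρeq, hdiv]; ring
  have hmvt : |I^s - (I - Esum)^s| ≤ s * (I/2)^(s-1) * |I - (I - Esum)| :=
    rpow_mvt_bound (by linarith only [hIpos]) (by linarith only [hIpos]) hIE hspos.le hs1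
  have habs2 : |I - (I - Esum)| = |Esum| := by congr 1; ring
  have hpow2 : (I/2)^(s-1) = (2:ℝ)^(1-s) * I^(s-1) := by
    rw [Real.div_rpow hIpos.le (by norm_num : (0:ℝ) ≤ 2), div_eq_mul_inv,
      ← Real.rpow_neg (by norm_num : (0:ℝ) ≤ 2), neg_sub]
    ring
  have hfinal : |R I θ τ| ≤ d^(-s) * (s * ((2:ℝ)^(1-s) * I^(s-1)) * (M₁ * I^(s*g))) := by
    rw [hRval, abs_mul, abs_of_nonneg (Real.rpow_nonneg hdpos.le _)]
    apply mul_le_mul_of_nonneg_left _ (Real.rpow_nonneg hdpos.le _)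
    calc |I^s - (I-Esum)^s| ≤ s * (I/2)^(s-1) * |Esum| := by rw [← habs2]; exact hmvt
      _ ≤ s * (I/2)^(s-1) * (M₁ * I^(s*g)) := by
          apply mul_le_mul_of_nonneg_left hEb3
          exact mul_nonneg hspos.le (Real.rpow_nonneg (by linarith only [hIpos]) _)
      _ = s * ((2:ℝ)^(1-s) * I^(s-1)) * (M₁ * I^(s*g)) := by rw [hpow2]
  have hIhalf : I^(s-1) * I^(s*g) = I^((1:ℝ)/2) := by
    rw [← Real.rpow_add hIpos, show s - 1 + s*g = (1:ℝ)/2 from hkey]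
  calc |R I θ τ| ≤ d^(-s) * (s * ((2:ℝ)^(1-s) * I^(s-1)) * (M₁ * I^(s*g))) := hfinal
    _ = (d^(-s) * (s * (2:ℝ)^(1-s) * M₁)) * (I^(s-1) * I^(s*g)) := by ring
    _ = K * I^((1:ℝ)/2) := by rw [hIhalf, hK_def]
end

section
/- (Lemma 4.1) Define g₁(I, θ, τ) = Σ_{i=0}^{2n} (2β·d^{1/(2β)})^{−1} · μᵢ(θ, τ) · I^{α(i+1)/(2β) − 1}. Then there is a constant K > 0 such that for all I ≥ 1, all θ, τ ∈ ℝ, and all nonnegative integers j, k with j + k ≤ 5, one has |∂_I^j ∂_θ^k g₁(I, θ, τ)| ≤ K · I^{1/2 − j}. -/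
open Finset

/-- Periodicity is preserved by `deriv`. -/
lemma periodic_deriv' (f : ℝ → ℝ) (c : ℝ) (h : Function.Periodic f c) :
    Function.Periodic (deriv f) c := by
  intro x
  have h1 : (fun y : ℝ => f (y + c)) = f := funext h
  have := deriv_comp_add_const f c x
  rw [h1] at this
  exact this.symm

lemma periodic_iteratedDeriv' (f : ℝ → ℝ) (c : ℝ) (h : Function.Periodic f c) (k : ℕ) :
    Function.Periodic (iteratedDeriv k f) c := by
  induction k with
  | zero => simpa [iteratedDeriv_zero]
  | succ k ih => rw [iteratedDeriv_succ]; exact periodic_deriv' _ _ ih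

/-- A continuous function periodic of period 1 is globally bounded. -/
lemma bound_of_periodic_continuous (f : ℝ → ℝ) (h : Function.Periodic f 1)
    (hc : Continuous f) : ∃ M, 0 ≤ M ∧ ∀ x, |f x| ≤ M := by
  obtain ⟨M, hM⟩ := (isCompact_Icc (a := (0:ℝ)) (b := 1)).exists_bound_of_continuousOn
    hc.continuousOn
  refine ⟨max M 0, le_max_right _ _, fun x => ?_⟩
  have h1 : f (Int.fract x) = f x := by
    have h2 := h.sub_int_mul_eq (x := x) ⌊x⌋
    rw [mul_one, Int.self_sub_floor] at h2
    exact h2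
  have h3 : Int.fract x ∈ Set.Icc (0:ℝ) 1 :=
    ⟨Int.fract_nonneg x, (Int.fract_lt_one x).le⟩
  have h4 := hM (Int.fract x) h3
  rw [Real.norm_eq_abs, h1] at h4
  exact h4.trans (le_max_left _ _)

/-- Iterated derivative of a finite sum of constants times `C^5` functions. -/
lemma iteratedDeriv_sum_cmul (s : Finset ℕ) (c : ℕ → ℝ) (p : ℕ → ℝ → ℝ)
    (hp : ∀ i ∈ s, ContDiff ℝ 5 (p i)) :
    ∀ k : ℕ, k ≤ 5 → ∀ θ : ℝ,
      iteratedDeriv k (fun θ' : ℝ => ∑ i ∈ s, c i * p i θ') θ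
        = ∑ i ∈ s, c i * iteratedDeriv k (p i) θ := by
  intro k
  induction k with
  | zero => intro _ θ; simp
  | succ k ih =>
    intro hk θ
    rw [iteratedDeriv_succ]
    have hfun : iteratedDeriv k (fun θ' : ℝ => ∑ i ∈ s, c i * p i θ')
        = fun θ' => ∑ i ∈ s, c i * iteratedDeriv k (p i) θ' :=
      funext fun θ' => ih (by omega) θ'
    rw [hfun]
    have hd : HasDerivAt (fun θ' => ∑ i ∈ s, c i * iteratedDeriv k (p i) θ')
        (∑ i ∈ s, c i * iteratedDeriv (k + 1) (p i) θ) θ := by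
      apply HasDerivAt.fun_sum
      intro i hi
      have hdiff : DifferentiableAt ℝ (iteratedDeriv k (p i)) θ := by
        have h5 : (k : WithTop ℕ∞) < 5 := by exact_mod_cast (by omega : k < 5)
        exact ((hp i hi).differentiable_iteratedDeriv k h5).differentiableAt
      have h6 : HasDerivAt (iteratedDeriv k (p i)) (iteratedDeriv (k + 1) (p i) θ) θ := by
        rw [iteratedDeriv_succ]
        exact hdiff.hasDerivAt
      exact h6.const_mul _
    exact hd.deriv

/-- Iterated derivative of a finite sum of power functions on the positive reals. -/
lemma iteratedDeriv_sum_rpow (s : Finset ℕ) (D r : ℕ → ℝ) :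
    ∀ (j : ℕ) (x : ℝ), 0 < x →
      iteratedDeriv j (fun y : ℝ => ∑ i ∈ s, D i * y ^ (r i)) x
        = ∑ i ∈ s, D i * (∏ m ∈ Finset.range j, (r i - m)) * x ^ (r i - j) := by
  intro j
  induction j with
  | zero => intro x _; simp
  | succ j ih =>
    intro x hx
    rw [iteratedDeriv_succ]
    have hev : iteratedDeriv j (fun y : ℝ => ∑ i ∈ s, D i * y ^ (r i))
        =ᶠ[nhds x] fun y => ∑ i ∈ s, D i * (∏ m ∈ Finset.range j, (r i - m)) * y ^ (r i - j) := by
      filter_upwards [Ioi_mem_nhds hx] with y hy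
      exact ih y hy
    rw [hev.deriv_eq]
    have hd : HasDerivAt
        (fun y : ℝ => ∑ i ∈ s, D i * (∏ m ∈ Finset.range j, (r i - m)) * y ^ (r i - j))
        (∑ i ∈ s, D i * (∏ m ∈ Finset.range j, (r i - m)) *
          ((r i - j) * x ^ (r i - j - 1))) x := by
      apply HasDerivAt.fun_sum
      intro i _
      exact (Real.hasDerivAt_rpow_const (Or.inl hx.ne')).const_mul _
    rw [hd.deriv]
    refine Finset.sum_congr rfl fun i _ => ?_
    rw [Finset.prod_range_succ]
    have hexp : r i - (↑(j + 1) : ℝ) = r i - j - 1 := by push_cast; ring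
    rw [hexp]
    ring

/-- Lemma 4.1: With
`g₁(I, θ, τ) = Σ_{i=0}^{2n} (2β·d^(1/(2β)))⁻¹ · μᵢ(θ, τ) · I^(α(i+1)/(2β) − 1)`,
there is `K > 0` such that for all `I ≥ 1`, all `θ, τ`, and all `j + k ≤ 5`,
`|∂_I^j ∂_θ^k g₁(I, θ, τ)| ≤ K · I^(1/2 − j)`. -/
theorem g1_derivative_estimates
    (n : ℕ) (hn : 1 ≤ n)
    (C S : ℝ → ℝ)
    (hC' : ∀ t, HasDerivAt C (S t) t)
    (hS' : ∀ t, HasDerivAt S (-(C t ^ (2 * n + 1))) t)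
    (hC0 : C 0 = 1) (hS0 : S 0 = 0)
    (T₀ : ℝ) (hT₀pos : 0 < T₀)
    (hCper : Function.Periodic C T₀) (hSper : Function.Periodic S T₀)
    (hT₀min : ∀ T : ℝ, 0 < T → Function.Periodic C T → Function.Periodic S T → T₀ ≤ T)
    (α β a d : ℝ)
    (hα : α = 1 / (n + 2)) (hβ : β = (n + 1) / (n + 2))
    (ha : a = T₀ / α) (hd : d = (2 * a) ^ (2 * β) / (2 * n + 2))
    (p : ℕ → ℝ → ℝ)
    (hp : ∀ i ≤ 2 * n, ContDiff ℝ 5 (p i))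
    (hpper : ∀ i ≤ 2 * n, ∀ t : ℝ, p i (t + 1) = p i t)
    (μ : ℕ → ℝ → ℝ → ℝ)
    (hμ : ∀ i : ℕ, ∀ θ τ : ℝ, μ i θ τ =
      p i θ * (2 * a) ^ (α * ((i : ℝ) + 1)) * d ^ (-(α * ((i : ℝ) + 1) / (2 * β))) *
        C ((τ - ⌊τ⌋) * T₀ / 2) ^ (i + 1) / ((i : ℝ) + 1))
    (g₁ : ℝ → ℝ → ℝ → ℝ)
    (hg₁ : ∀ I θ τ : ℝ, g₁ I θ τ =
      ∑ i ∈ Finset.range (2 * n + 1),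
        (2 * β * d ^ (1 / (2 * β)))⁻¹ * μ i θ τ * I ^ (α * ((i : ℝ) + 1) / (2 * β) - 1)) :
    ∃ K : ℝ, 0 < K ∧
      ∀ I : ℝ, 1 ≤ I → ∀ θ τ : ℝ, ∀ j k : ℕ, j + k ≤ 5 →
        |iteratedDeriv j (fun I' : ℝ => iteratedDeriv k (fun θ' : ℝ => g₁ I' θ' τ) θ) I|
          ≤ K * I ^ ((1 : ℝ) / 2 - j) := by
  -- basic positivity
  have hβpos : 0 < β := by
    rw [hβ]; positivity
  have h2β : (0:ℝ) < 2 * β := by linarith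
  -- the exponents
  set ρ : ℕ → ℝ := fun i => α * ((i : ℝ) + 1) / (2 * β) - 1 with hρdef
  have hρle : ∀ i ≤ 2 * n, ρ i ≤ 1 / 2 := by
    intro i hi
    have hn2 : (0:ℝ) < (n:ℝ) + 2 := by positivity
    have hic : (i:ℝ) ≤ 2 * (n:ℝ) := by exact_mod_cast hi
    have h1 : α * ((i:ℝ) + 1) ≤ 2 * β := by
      rw [hα, hβ]
      rw [show (1:ℝ)/((n:ℝ)+2) * ((i:ℝ)+1) = ((i:ℝ)+1)/((n:ℝ)+2) from by ring,
        show (2:ℝ) * (((n:ℝ)+1)/((n:ℝ)+2)) = (2*(n:ℝ)+2)/((n:ℝ)+2) from by ring]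
      gcongr
      linarith
    have h2 : α * ((i:ℝ) + 1) / (2 * β) ≤ 1 := (div_le_one h2β).mpr h1
    simp only [hρdef]
    linarith
  -- continuity and boundedness of `C ∘ (fract · * T₀/2)`
  have hCdiff : Differentiable ℝ C := fun t => (hC' t).differentiableAt
  obtain ⟨MC0, hMC0⟩ := (isCompact_Icc (a := (0:ℝ)) (b := T₀ / 2)).exists_bound_of_continuousOn
    hCdiff.continuous.continuousOn
  set MC : ℝ := max MC0 0 with hMCdef
  have hMCnn : 0 ≤ MC := le_max_right _ _
  have hMC : ∀ τ : ℝ, |C ((τ - ⌊τ⌋) * T₀ / 2)| ≤ MC := by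
    intro τ
    have hmem : (τ - ⌊τ⌋) * T₀ / 2 ∈ Set.Icc (0:ℝ) (T₀ / 2) := by
      constructor
      · have h0 : (0:ℝ) ≤ τ - ⌊τ⌋ := by
          rw [Int.self_sub_floor]; exact Int.fract_nonneg τ
        positivity
      · have h1 : τ - (⌊τ⌋:ℝ) ≤ 1 := by
          rw [Int.self_sub_floor]; exact (Int.fract_lt_one τ).le
        have h2 : (τ - ⌊τ⌋) * T₀ ≤ 1 * T₀ := by
          apply mul_le_mul_of_nonneg_right h1 hT₀pos.le
        rw [one_mul] at h2
        linarith
    have := hMC0 _ hmem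
    rw [Real.norm_eq_abs] at this
    exact this.trans (le_max_left _ _)
  -- bounds for the iterated derivatives of the `p i`
  have hMPk : ∀ i k : ℕ, ∃ M : ℝ, 0 ≤ M ∧
      (i ≤ 2 * n → k ≤ 5 → ∀ θ : ℝ, |iteratedDeriv k (p i) θ| ≤ M) := by
    intro i k
    by_cases hik : i ≤ 2 * n ∧ k ≤ 5
    · obtain ⟨hi, hk⟩ := hik
      have hper : Function.Periodic (p i) 1 := fun t => hpper i hi t
      have hcont : Continuous (iteratedDeriv k (p i)) :=
        (hp i hi).continuous_iteratedDeriv k (by exact_mod_cast (by exact_mod_cast hk : (k:ℕ∞) ≤ 5))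
      obtain ⟨M, hMnn, hM⟩ := bound_of_periodic_continuous _
        (periodic_iteratedDeriv' _ _ hper k) hcont
      exact ⟨M, hMnn, fun _ _ θ => hM θ⟩
    · exact ⟨0, le_rfl, fun h1 h2 => absurd ⟨h1, h2⟩ hik⟩
  choose MPk hMPknn hMPkb using hMPk
  set MP : ℕ → ℝ := fun i => ∑ k ∈ Finset.range 6, MPk i k with hMPdef
  have hMPnn : ∀ i, 0 ≤ MP i := fun i =>
    Finset.sum_nonneg fun k _ => hMPknn i k
  have hMPb : ∀ i ≤ 2 * n, ∀ k ≤ 5, ∀ θ : ℝ, |iteratedDeriv k (p i) θ| ≤ MP i := by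
    intro i hi k hk θ
    refine (hMPkb i k hi hk θ).trans ?_
    exact Finset.single_le_sum (fun m _ => hMPknn i m) (Finset.mem_range.mpr (by omega))
  -- the constant
  set c0 : ℝ := (2 * β * d ^ (1 / (2 * β)))⁻¹ with hc0def
  set ME : ℕ → ℝ := fun i =>
    |(2 * a) ^ (α * ((i : ℝ) + 1))| * |d ^ (-(α * ((i : ℝ) + 1) / (2 * β)))| * MC ^ (i + 1)
      / ((i : ℝ) + 1) with hMEdef
  have hMEnn : ∀ i : ℕ, 0 ≤ ME i := by
    intro i
    have : (0:ℝ) < (i:ℝ) + 1 := by positivity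
    simp only [hMEdef]
    positivity
  set tK : ℕ → ℝ := fun i => |c0| * ME i * MP i * (|ρ i| + 6) ^ 5 with htKdef
  have htKnn : ∀ i, 0 ≤ tK i := by
    intro i
    have h1 := hMEnn i
    have h2 := hMPnn i
    have h3 : (0:ℝ) ≤ (|ρ i| + 6) ^ 5 := by positivity
    simp only [htKdef]
    positivity
  refine ⟨1 + ∑ i ∈ Finset.range (2 * n + 1), tK i, by
    have : 0 ≤ ∑ i ∈ Finset.range (2 * n + 1), tK i :=
      Finset.sum_nonneg fun i _ => htKnn i
    linarith, ?_⟩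
  intro I hI θ τ j k hjk
  have hIpos : (0:ℝ) < I := lt_of_lt_of_le one_pos hI
  have hk5 : k ≤ 5 := by omega
  have hj5 : j ≤ 5 := by omega
  -- Step A : rewrite the inner iterated derivative
  set D : ℕ → ℝ := fun i =>
    c0 * ((2 * a) ^ (α * ((i : ℝ) + 1)) * d ^ (-(α * ((i : ℝ) + 1) / (2 * β))) *
      C ((τ - ⌊τ⌋) * T₀ / 2) ^ (i + 1) / ((i : ℝ) + 1)) * iteratedDeriv k (p i) θ with hDdef
  have hfun : (fun I' : ℝ => iteratedDeriv k (fun θ' : ℝ => g₁ I' θ' τ) θ)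
      = fun I' : ℝ => ∑ i ∈ Finset.range (2 * n + 1), D i * I' ^ (ρ i) := by
    funext I'
    have h1 : (fun θ' : ℝ => g₁ I' θ' τ)
        = fun θ' : ℝ => ∑ i ∈ Finset.range (2 * n + 1),
            (c0 * ((2 * a) ^ (α * ((i : ℝ) + 1)) * d ^ (-(α * ((i : ℝ) + 1) / (2 * β))) *
              C ((τ - ⌊τ⌋) * T₀ / 2) ^ (i + 1) / ((i : ℝ) + 1)) * I' ^ (ρ i)) * p i θ' := by
      funext θ'
      rw [hg₁]
      refine Finset.sum_congr rfl fun i hi => ?_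
      rw [hμ]
      simp only [hρdef, hc0def]
      ring
    rw [h1, iteratedDeriv_sum_cmul _ _ _
      (fun i hi => hp i (by have := Finset.mem_range.mp hi; omega)) k hk5 θ]
    refine Finset.sum_congr rfl fun i hi => ?_
    simp only [hDdef]
    ring
  rw [hfun, iteratedDeriv_sum_rpow _ _ _ j I hIpos]
  -- Step B : estimate
  have hIpow_pos : ∀ e : ℝ, (0:ℝ) < I ^ e := fun e => Real.rpow_pos_of_pos hIpos e
  calc |∑ i ∈ Finset.range (2 * n + 1), D i * (∏ m ∈ Finset.range j, (ρ i - m)) * I ^ (ρ i - j)|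
      ≤ ∑ i ∈ Finset.range (2 * n + 1),
          |D i * (∏ m ∈ Finset.range j, (ρ i - m)) * I ^ (ρ i - j)| :=
        Finset.abs_sum_le_sum_abs _ _
    _ ≤ ∑ i ∈ Finset.range (2 * n + 1), tK i * I ^ ((1:ℝ)/2 - j) := by
        refine Finset.sum_le_sum fun i hi => ?_
        have hi' : i ≤ 2 * n := by
          have := Finset.mem_range.mp hi; omega
        rw [abs_mul, abs_mul, abs_of_pos (hIpow_pos _)]
        -- bound |D i|
        have hD : |D i| ≤ |c0| * ME i * MP i := by
          simp only [hDdef]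
          rw [abs_mul, abs_mul]
          have hE : |(2 * a) ^ (α * ((i : ℝ) + 1)) * d ^ (-(α * ((i : ℝ) + 1) / (2 * β))) *
              C ((τ - ⌊τ⌋) * T₀ / 2) ^ (i + 1) / ((i : ℝ) + 1)| ≤ ME i := by
            have hip : (0:ℝ) < (i:ℝ) + 1 := by positivity
            rw [abs_div, abs_mul, abs_mul, abs_of_pos hip, abs_pow]
            simp only [hMEdef]
            gcongr
            exact hMC τ
          have hP : |iteratedDeriv k (p i) θ| ≤ MP i := hMPb i hi' k hk5 θ
          refine mul_le_mul (mul_le_mul_of_nonneg_left hE (abs_nonneg _)) hP (abs_nonneg _) ?_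
          exact mul_nonneg (abs_nonneg _) (hMEnn i)
        -- bound the product
        have hProd : |∏ m ∈ Finset.range j, (ρ i - m)| ≤ (|ρ i| + 6) ^ 5 := by
          rw [Finset.abs_prod]
          have h1 : ∏ m ∈ Finset.range j, |ρ i - (m:ℝ)| ≤ ∏ m ∈ Finset.range j, (|ρ i| + 6) := by
            refine Finset.prod_le_prod (fun m _ => abs_nonneg _) fun m hm => ?_
            have hm5 : (m:ℝ) ≤ 6 := by
              have := Finset.mem_range.mp hm
              have : m ≤ 5 := by omega
              exact_mod_cast this.trans (by norm_num)
            calc |ρ i - (m:ℝ)| ≤ |ρ i| + |(m:ℝ)| := abs_sub _ _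
              _ ≤ |ρ i| + 6 := by
                  rw [abs_of_nonneg (by positivity : (0:ℝ) ≤ (m:ℝ))]
                  linarith
          rw [Finset.prod_const] at h1
          refine h1.trans ?_
          have hbase : (1:ℝ) ≤ |ρ i| + 6 := by
            have := abs_nonneg (ρ i); linarith
          calc (|ρ i| + 6) ^ (Finset.range j).card = (|ρ i| + 6) ^ j := by
                rw [Finset.card_range]
            _ ≤ (|ρ i| + 6) ^ 5 := pow_le_pow_right₀ hbase hj5
        -- combine
        have hIe : I ^ (ρ i - j) ≤ I ^ ((1:ℝ)/2 - j) :=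
          Real.rpow_le_rpow_of_exponent_le hI (by
            have := hρle i hi'; linarith)
        calc |D i| * |∏ m ∈ Finset.range j, (ρ i - m)| * I ^ (ρ i - j)
            ≤ (|c0| * ME i * MP i) * ((|ρ i| + 6) ^ 5) * I ^ ((1:ℝ)/2 - j) := by
              have h0 : (0:ℝ) ≤ |c0| * ME i * MP i := by
                have := hMEnn i; have := hMPnn i; positivity
              have hin : |D i| * |∏ m ∈ Finset.range j, (ρ i - m)|
                  ≤ (|c0| * ME i * MP i) * ((|ρ i| + 6) ^ 5) :=
                mul_le_mul hD hProd (abs_nonneg _) h0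
              exact mul_le_mul hin hIe (hIpow_pos _).le
                (by have := hMEnn i; have := hMPnn i; positivity)
          _ = tK i * I ^ ((1:ℝ)/2 - j) := by simp only [htKdef]
    _ = (∑ i ∈ Finset.range (2 * n + 1), tK i) * I ^ ((1:ℝ)/2 - j) := by
        rw [Finset.sum_mul]
    _ ≤ (1 + ∑ i ∈ Finset.range (2 * n + 1), tK i) * I ^ ((1:ℝ)/2 - j) := by
        have := (hIpow_pos ((1:ℝ)/2 - j)).le
        nlinarith [hIpow_pos ((1:ℝ)/2 - j)]
end
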